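/- arXiv:2412.12786 — 4 statements merged into one kernel-verified Lean document; each statement's English description precedes it below -/
import Mathlib

section
/- For every k ≥ 2 the following holds: if 𝒫 is a set of patterns such that for every ordered matching M one has mn(M) ≤ k if and only if M avoids every pattern in 𝒫, then 𝒫 is infinite. -/
set_option linter.unusedSectionVars false
set_option linter.unusedVariables false


/-!
Common framework: ordered graphs on vertex set `Fin n` (the vertex order is the
order of `Fin n`), with edges encoded as pairs `(u, v)` with `u < v`.
-/

namespace MixedLayouts

/-- An ordered graph: vertices `Fin n` (with their natural linear order),
edges given as ordered pairs `(u, v)` with `u < v`. -/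
structure OGraph where
  n : ℕ
  E : Finset (Fin n × Fin n)
  lt_of_mem : ∀ e ∈ E, e.1 < e.2

/-- Two edges `e = uv`, `f = xy` cross: `u ≺ x ≺ v ≺ y` (or symmetrically). -/
def Cross {n : ℕ} (e f : Fin n × Fin n) : Prop :=
  (e.1 < f.1 ∧ f.1 < e.2 ∧ e.2 < f.2) ∨ (f.1 < e.1 ∧ e.1 < f.2 ∧ f.2 < e.2)

/-- Two edges `e = uv`, `f = xy` nest: `u ≺ x ≺ y ≺ v` (or symmetrically). -/
def Nest {n : ℕ} (e f : Fin n × Fin n) : Prop :=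
  (e.1 < f.1 ∧ f.2 < e.2) ∨ (f.1 < e.1 ∧ e.2 < f.2)

/-- `e ↗ f`: both endpoints increase (for separated layouts this is crossing). -/
def Up {n : ℕ} (e f : Fin n × Fin n) : Prop := e.1 < f.1 ∧ e.2 < f.2

/-- `e ↘ f`: first endpoint increases, second decreases
(for separated layouts this means `f` nests inside `e`). -/
def Down {n : ℕ} (e f : Fin n × Fin n) : Prop := e.1 < f.1 ∧ f.2 < e.2

namespace OGraph

/-- Degree of a vertex. -/
def degree (G : OGraph) (v : Fin G.n) : ℕ :=
  (G.E.filter fun e => e.1 = v ∨ e.2 = v).card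

/-- An ordered matching: every vertex has degree exactly one. -/
def IsMatching (G : OGraph) : Prop := ∀ v : Fin G.n, G.degree v = 1

/-- A separated layout of a bipartite ordered graph: there is a threshold `t`
such that every edge goes from a vertex before `t` to a vertex from `t` on. -/
def Separated (G : OGraph) : Prop :=
  ∃ t : ℕ, ∀ e ∈ G.E, (e.1 : ℕ) < t ∧ t ≤ (e.2 : ℕ)

/-- An `s`-stack `q`-queue layout: a partition of the edges into `s` stacks
(pages `0, …, s-1`, pairwise non-crossing) and `q` queues
(pages `s, …, s+q-1`, pairwise non-nesting). -/
def HasLayout (G : OGraph) (s q : ℕ) : Prop :=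
  ∃ c : Fin G.n × Fin G.n → ℕ,
    (∀ e ∈ G.E, c e < s + q) ∧
    ∀ e ∈ G.E, ∀ f ∈ G.E, c e = c f →
      (c e < s → ¬ Cross e f) ∧ (s ≤ c e → ¬ Nest e f)

/-- The mixed page number: the minimum of `s + q` over all
`s`-stack `q`-queue layouts. -/
noncomputable def mn (G : OGraph) : ℕ :=
  sInf {m | ∃ s q, s + q = m ∧ G.HasLayout s q}

/-- A `t`-thick `k`-twist: `k` groups of `t` edges each, edges within a group
pairwise nest, edges from different groups pairwise cross. -/
def HasThickTwist (G : OGraph) (k t : ℕ) : Prop :=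
  ∃ e : Fin k → Fin t → Fin G.n × Fin G.n,
    (∀ i j, e i j ∈ G.E) ∧
    (Function.Injective fun p : Fin k × Fin t => e p.1 p.2) ∧
    (∀ i : Fin k, ∀ j j' : Fin t, j ≠ j' → Nest (e i j) (e i j')) ∧
    (∀ i i' : Fin k, ∀ j j' : Fin t, i ≠ i' → Cross (e i j) (e i' j'))

/-- A `t`-thick `k`-rainbow: `k` groups of `t` edges each, edges within a group
pairwise cross, edges from different groups pairwise nest. -/
def HasThickRainbow (G : OGraph) (k t : ℕ) : Prop :=
  ∃ e : Fin k → Fin t → Fin G.n × Fin G.n,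
    (∀ i j, e i j ∈ G.E) ∧
    (Function.Injective fun p : Fin k × Fin t => e p.1 p.2) ∧
    (∀ i : Fin k, ∀ j j' : Fin t, j ≠ j' → Cross (e i j) (e i j')) ∧
    (∀ i i' : Fin k, ∀ j j' : Fin t, i ≠ i' → Nest (e i j) (e i' j'))

/-- A `k`-thick pattern: a `k`-thick `k`-twist or a `k`-thick `k`-rainbow. -/
def HasThickPattern (G : OGraph) (k : ℕ) : Prop :=
  G.HasThickTwist k k ∨ G.HasThickRainbow k k

/-- `G` contains a `k`-⋄-pattern: `k²` edges `e i j` with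
`e i j ↗ e i j'` for `j < j'` and `e i j ↘ e i' j` for `i < i'`. -/
def HasDiamond (G : OGraph) (k : ℕ) : Prop :=
  ∃ e : Fin k → Fin k → Fin G.n × Fin G.n,
    (∀ i j, e i j ∈ G.E) ∧
    (Function.Injective fun p : Fin k × Fin k => e p.1 p.2) ∧
    (∀ i : Fin k, ∀ j j' : Fin k, j < j' → Up (e i j) (e i j')) ∧
    (∀ j : Fin k, ∀ i i' : Fin k, i < i' → Down (e i j) (e i' j))

/-- The edge set of `G` is exactly a `k`-⋄-pattern. -/
def FormsDiamond (G : OGraph) (k : ℕ) : Prop :=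
  ∃ e : Fin k → Fin k → Fin G.n × Fin G.n,
    (Function.Injective fun p : Fin k × Fin k => e p.1 p.2) ∧
    (∀ i : Fin k, ∀ j j' : Fin k, j < j' → Up (e i j) (e i j')) ∧
    (∀ j : Fin k, ∀ i i' : Fin k, i < i' → Down (e i j) (e i' j)) ∧
    G.E = Finset.image (fun p : Fin k × Fin k => e p.1 p.2) Finset.univ

/-- Delete an edge. -/
def erase (G : OGraph) (e : Fin G.n × Fin G.n) : OGraph :=
  ⟨G.n, G.E.erase e, fun f hf => G.lt_of_mem f (Finset.mem_of_mem_erase hf)⟩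

/-- `(s,q)`-critical: no `s`-stack `q`-queue layout, but every one-edge-deleted
subgraph has one. -/
def IsSQCritical (G : OGraph) (s q : ℕ) : Prop :=
  ¬ G.HasLayout s q ∧ ∀ e ∈ G.E, (G.erase e).HasLayout s q

/-- `k`-critical: `mn G > k`, but `mn (G - e) ≤ k` for every edge `e`. -/
def IsKCritical (G : OGraph) (k : ℕ) : Prop :=
  k < G.mn ∧ ∀ e ∈ G.E, (G.erase e).mn ≤ k

end OGraph

/-- An ordered graph `G` contains the pattern `H`: an order-preserving injection
of the vertices mapping edges to edges. -/
def Contains (G H : OGraph) : Prop :=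
  ∃ φ : Fin H.n → Fin G.n, StrictMono φ ∧ ∀ e ∈ H.E, (φ e.1, φ e.2) ∈ G.E

/-- A chain of the poset `P(M)` of a separated matching
(elements: edges; order: `↗`). -/
def IsPChain {n : ℕ} (C : Finset (Fin n × Fin n)) : Prop :=
  ∀ e ∈ C, ∀ f ∈ C, e ≠ f → Up e f ∨ Up f e

/-- An antichain of the poset `P(M)` of a separated matching. -/
def IsPAntichain {n : ℕ} (C : Finset (Fin n × Fin n)) : Prop :=
  ∀ e ∈ C, ∀ f ∈ C, e ≠ f → ¬ Up e f ∧ ¬ Up f e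

/-- `c_i` for an abstract finite poset: the maximum number of elements
covered by `i` chains. -/
noncomputable def chainCover (α : Type) [Fintype α] [PartialOrder α] [DecidableEq α]
    (i : ℕ) : ℕ :=
  sSup {m | ∃ C : Fin i → Finset α,
    (∀ j, IsChain (· ≤ ·) (C j : Set α)) ∧ (Finset.univ.biUnion C).card = m}

/-- `a_i` for an abstract finite poset: the maximum number of elements
covered by `i` antichains. -/
noncomputable def antichainCover (α : Type) [Fintype α] [PartialOrder α] [DecidableEq α]
    (i : ℕ) : ℕ :=
  sSup {m | ∃ A : Fin i → Finset α,
    (∀ j, IsAntichain (· ≤ ·) (A j : Set α)) ∧ (Finset.univ.biUnion A).card = m}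

end MixedLayouts

namespace MixedLayouts

lemma degree_eq_one {G : OGraph} {v : Fin G.n} {e : Fin G.n × Fin G.n}
    (he : e ∈ G.E) (hv : e.1 = v ∨ e.2 = v)
    (hu : ∀ f ∈ G.E, (f.1 = v ∨ f.2 = v) → f = e) : G.degree v = 1 := by
  unfold OGraph.degree
  have : G.E.filter (fun f => f.1 = v ∨ f.2 = v) = {e} := by
    apply Finset.ext
    intro f
    simp only [Finset.mem_filter, Finset.mem_singleton]
    constructor
    · rintro ⟨h1, h2⟩; exact hu f h1 h2
    · rintro rfl; exact ⟨he, hv⟩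
  rw [this, Finset.card_singleton]

lemma touch_unique {G : OGraph} (hG : G.IsMatching) {v : Fin G.n}
    {e f : Fin G.n × Fin G.n} (he : e ∈ G.E) (hev : e.1 = v ∨ e.2 = v)
    (hf : f ∈ G.E) (hfv : f.1 = v ∨ f.2 = v) : e = f := by
  have h := hG v
  unfold OGraph.degree at h
  exact Finset.card_le_one.mp h.le e (Finset.mem_filter.mpr ⟨he, hev⟩)
    f (Finset.mem_filter.mpr ⟨hf, hfv⟩)

lemma touch_exists {G : OGraph} (hG : G.IsMatching) (v : Fin G.n) :
    ∃ e ∈ G.E, e.1 = v ∨ e.2 = v := by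
  have h := hG v
  unfold OGraph.degree at h
  have : (G.E.filter fun e => e.1 = v ∨ e.2 = v).Nonempty := by
    rw [← Finset.card_pos, h]; norm_num
  obtain ⟨e, he⟩ := this
  obtain ⟨h1, h2⟩ := Finset.mem_filter.mp he
  exact ⟨e, h1, h2⟩

namespace Construction

/-- number of `Y`-edges -/
def mm (k K : ℕ) : ℕ := k * K + 1
/-- number of vertices -/
def nn (k K : ℕ) : ℕ := 2 * mm k K + 2 * (k * (k + 1))

lemma nn_pos (k K : ℕ) : 0 < nn k K := by unfold nn mm; omega

/-- left endpoint of `i`-th Y-edge -/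
def yl (k K i : ℕ) : ℕ := if i + k ≤ mm k K then 2 * i else 2 * i + (2 * k - 1) - 2 * mm k K
/-- right endpoint of `i`-th Y-edge -/
def yr (k K i : ℕ) : ℕ := if i + k ≤ mm k K then 2 * i + (2 * k - 1) else 2 * i
/-- left endpoint of Z-edge (g, r) -/
def zl (k K g r : ℕ) : ℕ := 2 * mm k K + ((k + 1) * g + r)
/-- right endpoint of Z-edge (g, r) -/
def zr (k K g r : ℕ) : ℕ := 2 * mm k K + k * (k + 1) + ((k + 1) * g + (k - r))

def fn (k K x : ℕ) : Fin (nn k K) := ⟨x % nn k K, Nat.mod_lt _ (nn_pos k K)⟩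

def eY (k K i : ℕ) : Fin (nn k K) × Fin (nn k K) := (fn k K (yl k K i), fn k K (yr k K i))
def eZ (k K g r : ℕ) : Fin (nn k K) × Fin (nn k K) := (fn k K (zl k K g r), fn k K (zr k K g r))

def EE (k K : ℕ) : Finset (Fin (nn k K) × Fin (nn k K)) :=
  ((Finset.range (mm k K)).image (eY k K)) ∪
    (((Finset.range k) ×ˢ (Finset.range (k + 1))).image (fun p => eZ k K p.1 p.2))

section params
variable {k K : ℕ} (hk : 2 ≤ k) (hK : k + 1 ≤ K)

include hk hK

lemma hm2 : 2 * k + 2 ≤ mm k K := by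
  unfold mm
  have : k * (k + 1) ≤ k * K := Nat.mul_le_mul_left k hK
  have : 2 * (k + 1) ≤ k * (k + 1) := Nat.mul_le_mul_right (k + 1) hk
  omega

lemma hkm : k + 1 ≤ mm k K := by have := hm2 hk hK; omega

-- bounds
lemma yl_lt {i : ℕ} (hi : i < mm k K) : yl k K i < 2 * mm k K := by
  have := hm2 hk hK; unfold yl; split <;> omega

lemma yr_lt {i : ℕ} (hi : i < mm k K) : yr k K i < 2 * mm k K := by
  have := hm2 hk hK; unfold yr; split <;> omega

lemma zblk {g r : ℕ} (hg : g < k) (hr : r < k + 1) :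
    (k + 1) * g + r < k * (k + 1) ∧ (k + 1) * g + (k - r) < k * (k + 1) := by
  have h1 : (k + 1) * (g + 1) ≤ (k + 1) * k := Nat.mul_le_mul_left (k + 1) hg
  have h2 : (k + 1) * (g + 1) = (k + 1) * g + (k + 1) := by ring
  have h3 : (k + 1) * k = k * (k + 1) := by ring
  omega

lemma zl_lt {g r : ℕ} (hg : g < k) (hr : r < k + 1) : zl k K g r < nn k K := by
  have := zblk (K := K) hk hK hg hr; unfold zl nn; omega

lemma zr_lt {g r : ℕ} (hg : g < k) (hr : r < k + 1) : zr k K g r < nn k K := by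
  have := zblk (K := K) hk hK hg hr; unfold zr nn; omega

-- value lemmas
lemma eY_fst {i : ℕ} (hi : i < mm k K) : ((eY k K i).1 : ℕ) = yl k K i := by
  have h := yl_lt hk hK hi
  have : yl k K i < nn k K := by unfold nn; omega
  simp [eY, fn, Nat.mod_eq_of_lt this]

lemma eY_snd {i : ℕ} (hi : i < mm k K) : ((eY k K i).2 : ℕ) = yr k K i := by
  have h := yr_lt hk hK hi
  have : yr k K i < nn k K := by unfold nn; omega
  simp [eY, fn, Nat.mod_eq_of_lt this]

lemma eZ_fst {g r : ℕ} (hg : g < k) (hr : r < k + 1) : ((eZ k K g r).1 : ℕ) = zl k K g r := by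
  simp [eZ, fn, Nat.mod_eq_of_lt (zl_lt hk hK hg hr)]

lemma eZ_snd {g r : ℕ} (hg : g < k) (hr : r < k + 1) : ((eZ k K g r).2 : ℕ) = zr k K g r := by
  simp [eZ, fn, Nat.mod_eq_of_lt (zr_lt hk hK hg hr)]

lemma eY_mem {i : ℕ} (hi : i < mm k K) : eY k K i ∈ EE k K := by
  apply Finset.mem_union_left
  exact Finset.mem_image.mpr ⟨i, Finset.mem_range.mpr hi, rfl⟩

lemma eZ_mem {g r : ℕ} (hg : g < k) (hr : r < k + 1) : eZ k K g r ∈ EE k K := by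
  apply Finset.mem_union_right
  exact Finset.mem_image.mpr ⟨(g, r), Finset.mem_product.mpr ⟨Finset.mem_range.mpr hg,
    Finset.mem_range.mpr hr⟩, rfl⟩

lemma mem_EE {e : Fin (nn k K) × Fin (nn k K)} (he : e ∈ EE k K) :
    (∃ i < mm k K, e = eY k K i) ∨ (∃ g < k, ∃ r < k + 1, e = eZ k K g r) := by
  rcases Finset.mem_union.mp he with h | h
  · obtain ⟨i, hi, rfl⟩ := Finset.mem_image.mp h
    exact Or.inl ⟨i, Finset.mem_range.mp hi, rfl⟩
  · obtain ⟨p, hp, rfl⟩ := Finset.mem_image.mp h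
    obtain ⟨h1, h2⟩ := Finset.mem_product.mp hp
    exact Or.inr ⟨p.1, Finset.mem_range.mp h1, p.2, Finset.mem_range.mp h2, rfl⟩

lemma EE_lt {e : Fin (nn k K) × Fin (nn k K)} (he : e ∈ EE k K) : e.1 < e.2 := by
  have hm := hm2 (K := K) hk hK
  rcases mem_EE hk hK he with ⟨i, hi, rfl⟩ | ⟨g, hg, r, hr, rfl⟩
  · rw [Fin.lt_def, eY_fst hk hK hi, eY_snd hk hK hi]
    unfold yl yr; split <;> omega
  · rw [Fin.lt_def, eZ_fst hk hK hg hr, eZ_snd hk hK hg hr]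
    unfold zl zr
    have := zblk (K := K) hk hK hg hr
    omega


-- decoding: every vertex is an endpoint of exactly one edge
lemma y_touch {i v : ℕ} (hi : i < mm k K) (hv : yl k K i = v ∨ yr k K i = v) :
    (v % 2 = 0 → v / 2 = i) ∧
    (v % 2 = 1 → 2 * k - 1 ≤ v → (v - (2 * k - 1)) / 2 = i) ∧
    (v % 2 = 1 → v < 2 * k - 1 → (v + 2 * mm k K + 1 - 2 * k) / 2 = i) := by
  have hm := hm2 (K := K) hk hK
  unfold yl yr at hv
  by_cases h : i + k ≤ mm k K <;> simp [h] at hv <;> rcases hv with rfl | rfl <;>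
    refine ⟨?_, ?_, ?_⟩ <;> intro h1 <;> try intro h2
  all_goals omega

lemma exists_unique_touch {v : ℕ} (hv : v < nn k K) :
    ∃ e ∈ EE k K, (((e.1 : ℕ) = v ∨ (e.2 : ℕ) = v) ∧
      ∀ f ∈ EE k K, ((f.1 : ℕ) = v ∨ (f.2 : ℕ) = v) → f = e) := by
  have hm := hm2 (K := K) hk hK
  have hkpos : 0 < k + 1 := by omega
  by_cases hY : v < 2 * mm k K
  · -- Y side
    -- the index of the edge owning v
    set i : ℕ := if v % 2 = 0 then v / 2
      else if 2 * k - 1 ≤ v then (v - (2 * k - 1)) / 2 else (v + 2 * mm k K + 1 - 2 * k) / 2 with hidef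
    have hi : i < mm k K ∧ (yl k K i = v ∨ yr k K i = v) := by
      unfold yl yr
      by_cases h0 : v % 2 = 0
      · simp only [hidef, if_pos h0]
        by_cases h : v / 2 + k ≤ mm k K <;> simp [h] <;> omega
      · simp only [hidef, if_neg h0]
        by_cases h2 : 2 * k - 1 ≤ v
        · have hle : (v - (2 * k - 1)) / 2 + k ≤ mm k K := by omega
          simp only [if_pos h2, if_pos hle]
          omega
        · have hle : ¬ ((v + 2 * mm k K + 1 - 2 * k) / 2 + k ≤ mm k K) := by omega
          simp only [if_neg h2, if_neg hle]
          omega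
    refine ⟨eY k K i, eY_mem hk hK hi.1, ?_, ?_⟩
    · rw [eY_fst hk hK hi.1, eY_snd hk hK hi.1]; exact hi.2
    · intro f hf htf
      rcases mem_EE hk hK hf with ⟨j, hj, rfl⟩ | ⟨g, hg, r, hr, rfl⟩
      · rw [eY_fst hk hK hj, eY_snd hk hK hj] at htf
        have hd := y_touch hk hK hj htf
        have : j = i := by
          by_cases h0 : v % 2 = 0
          · simp only [hidef, if_pos h0]; omega
          · have h1 : v % 2 = 1 := by omega
            by_cases h2 : 2 * k - 1 ≤ v
            · simp only [hidef, if_neg h0, if_pos h2]; omega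
            · simp only [hidef, if_neg h0, if_neg h2]; omega
        rw [this]
      · rw [eZ_fst hk hK hg hr, eZ_snd hk hK hg hr] at htf
        unfold zl zr at htf; omega
  · -- Z side
    have hv2 : 2 * mm k K ≤ v := by omega
    have hnn : v < 2 * mm k K + 2 * (k * (k + 1)) := by unfold nn at hv; omega
    set w := v - 2 * mm k K with hw
    by_cases hL : w < k * (k + 1)
    · set g := w / (k + 1) with hg
      set r := w % (k + 1) with hr
      have hgk : g < k := by
        rw [hg, Nat.div_lt_iff_lt_mul hkpos]; omega
      have hrk : r < k + 1 := Nat.mod_lt _ hkpos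
      have hzl : zl k K g r = v := by
        unfold zl; rw [hg, hr, Nat.div_add_mod]; omega
      refine ⟨eZ k K g r, eZ_mem hk hK hgk hrk, ?_, ?_⟩
      · left; rw [eZ_fst hk hK hgk hrk, hzl]
      · intro f hf htf
        rcases mem_EE hk hK hf with ⟨j, hj, rfl⟩ | ⟨g', hg', r', hr', rfl⟩
        · rw [eY_fst hk hK hj, eY_snd hk hK hj] at htf
          have := yl_lt hk hK hj; have := yr_lt hk hK hj; omega
        · rw [eZ_fst hk hK hg' hr', eZ_snd hk hK hg' hr'] at htf
          unfold zl zr at htf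
          have hb := zblk (K := K) hk hK hg' hr'
          have hw' : (k+1) * g' + r' = w := by omega
          have hgg : g' = g ∧ r' = r := by
            constructor
            · rw [hg, ← hw', Nat.mul_add_div hkpos, Nat.div_eq_of_lt hr', Nat.add_zero]
            · rw [hr, ← hw', Nat.mul_add_mod, Nat.mod_eq_of_lt hr']
          rw [hgg.1, hgg.2]
    · set w' := w - k * (k + 1) with hw'
      have hwlt : w' < k * (k + 1) := by omega
      set g := w' / (k + 1) with hg
      set rr := w' % (k + 1) with hrr
      have hgk : g < k := by rw [hg, Nat.div_lt_iff_lt_mul hkpos]; omega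
      have hrk : rr < k + 1 := Nat.mod_lt _ hkpos
      have hrk' : k - rr < k + 1 := by omega
      have hzr : zr k K g (k - rr) = v := by
        unfold zr
        have : k - (k - rr) = rr := by omega
        rw [this, hg, hrr, Nat.div_add_mod]; omega
      refine ⟨eZ k K g (k - rr), eZ_mem hk hK hgk hrk', ?_, ?_⟩
      · right; rw [eZ_snd hk hK hgk hrk', hzr]
      · intro f hf htf
        rcases mem_EE hk hK hf with ⟨j, hj, rfl⟩ | ⟨g', hg', r', hr', rfl⟩
        · rw [eY_fst hk hK hj, eY_snd hk hK hj] at htf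
          have := yl_lt hk hK hj; have := yr_lt hk hK hj; omega
        · rw [eZ_fst hk hK hg' hr', eZ_snd hk hK hg' hr'] at htf
          unfold zl zr at htf
          have hb := zblk (K := K) hk hK hg' hr'
          have hv' : (k+1) * g' + (k - r') = w' := by omega
          have hgg : g' = g := by
            rw [hg, ← hv', Nat.mul_add_div hkpos, Nat.div_eq_of_lt (by omega : k - r' < k + 1), Nat.add_zero]
          have hrr' : k - r' = rr := by
            rw [hrr, ← hv', Nat.mul_add_mod, Nat.mod_eq_of_lt (by omega : k - r' < k + 1)]
          have : r' = k - rr := by omega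
          rw [hgg, this]


/-- the construction as an ordered graph -/
def MG (k K : ℕ) (hk : 2 ≤ k) (hK : k + 1 ≤ K) : OGraph :=
  ⟨nn k K, EE k K, fun _ he => EE_lt hk hK he⟩

lemma MG_matching : (MG k K hk hK).IsMatching := by
  intro v
  obtain ⟨e, he, hv, hu⟩ := exists_unique_touch hk hK v.isLt
  exact degree_eq_one (G := MG k K hk hK) he
    (by rcases hv with h | h <;> [left; right] <;> exact Fin.ext h)
    (fun f hf htf => hu f hf (by rcases htf with h | h <;> [left; right] <;> exact congrArg Fin.val h))


omit hk hK in
lemma cross_symm {n : ℕ} {e f : Fin n × Fin n} (h : Cross e f) : Cross f e := by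
  unfold Cross at *; tauto

omit hk hK in
lemma nest_symm {n : ℕ} {e f : Fin n × Fin n} (h : Nest e f) : Nest f e := by
  unfold Nest at *; tauto

omit hk hK in
lemma nest_not_cross {n : ℕ} {e f : Fin n × Fin n} (h : Nest e f) : ¬ Cross e f := by
  unfold Nest Cross at *
  rw [Fin.lt_def, Fin.lt_def] at *
  simp only [Fin.lt_def] at *
  omega

lemma crossY_iff {i j : ℕ} (hij : i < j) (hj : j < mm k K) :
    Cross (eY k K i) (eY k K j) ↔ (j < i + k ∨ i + mm k K < j + k) := by
  have hm := hm2 (K := K) hk hK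
  have hi : i < mm k K := by omega
  unfold Cross
  simp only [Fin.lt_def, eY_fst hk hK hi, eY_snd hk hK hi, eY_fst hk hK hj, eY_snd hk hK hj]
  unfold yl yr
  by_cases h1 : i + k ≤ mm k K <;> by_cases h2 : j + k ≤ mm k K <;> simp [h1, h2] <;> omega

lemma crossY_of {i j : ℕ} (hne : i ≠ j) (hi : i < mm k K) (hj : j < mm k K)
    (hd : (i < j ∧ (j < i + k ∨ i + mm k K < j + k)) ∨
          (j < i ∧ (i < j + k ∨ j + mm k K < i + k))) :
    Cross (eY k K i) (eY k K j) := by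
  rcases hd with ⟨h1, h2⟩ | ⟨h1, h2⟩
  · exact (crossY_iff hk hK h1 hj).mpr h2
  · exact cross_symm ((crossY_iff hk hK h1 hi).mpr h2)

lemma not_crossY {i j : ℕ} (hij : i < j) (hj : j < mm k K)
    (hd : ¬ (j < i + k ∨ i + mm k K < j + k)) : ¬ Cross (eY k K i) (eY k K j) := by
  rw [crossY_iff hk hK hij hj]; exact hd

lemma zNest {g r r' : ℕ} (hg : g < k) (hr : r < k + 1) (hr' : r' < k + 1) (hne : r ≠ r') :
    Nest (eZ k K g r) (eZ k K g r') := by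
  unfold Nest
  simp only [Fin.lt_def, eZ_fst hk hK hg hr, eZ_snd hk hK hg hr,
    eZ_fst hk hK hg hr', eZ_snd hk hK hg hr']
  unfold zl zr
  omega

lemma zCross {g g' r r' : ℕ} (hg : g < k) (hg' : g' < k) (hr : r < k + 1) (hr' : r' < k + 1)
    (hne : g ≠ g') : Cross (eZ k K g r) (eZ k K g' r') := by
  unfold Cross
  simp only [Fin.lt_def, eZ_fst hk hK hg hr, eZ_snd hk hK hg hr,
    eZ_fst hk hK hg' hr', eZ_snd hk hK hg' hr']
  unfold zl zr
  have hb := zblk (K := K) hk hK hg hr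
  have hb' := zblk (K := K) hk hK hg' hr'
  rcases Nat.lt_or_ge g g' with h | h
  · have : (k + 1) * (g + 1) ≤ (k + 1) * g' := Nat.mul_le_mul_left (k + 1) h
    have he : (k + 1) * (g + 1) = (k + 1) * g + (k + 1) := by ring
    left; omega
  · have hgg : g' < g := by omega
    have : (k + 1) * (g' + 1) ≤ (k + 1) * g := Nat.mul_le_mul_left (k + 1) hgg
    have he : (k + 1) * (g' + 1) = (k + 1) * g' + (k + 1) := by ring
    right; omega

lemma sepYZ {i g r : ℕ} (hi : i < mm k K) (hg : g < k) (hr : r < k + 1) :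
    ¬ Cross (eY k K i) (eZ k K g r) ∧ ¬ Nest (eY k K i) (eZ k K g r) := by
  have h1 := yl_lt hk hK hi
  have h2 := yr_lt hk hK hi
  unfold Cross Nest
  simp only [Fin.lt_def, eY_fst hk hK hi, eY_snd hk hK hi, eZ_fst hk hK hg hr, eZ_snd hk hK hg hr]
  unfold zl zr
  omega

lemma eY_injOn {i j : ℕ} (hi : i < mm k K) (hj : j < mm k K) (h : eY k K i = eY k K j) :
    i = j := by
  have h1 : ((eY k K i).1 : ℕ) = ((eY k K j).1 : ℕ) := by rw [h]
  have h2 : ((eY k K i).2 : ℕ) = ((eY k K j).2 : ℕ) := by rw [h]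
  rw [eY_fst hk hK hi, eY_fst hk hK hj] at h1
  rw [eY_snd hk hK hi, eY_snd hk hK hj] at h2
  have hm := hm2 (K := K) hk hK
  simp only [yl, yr] at h1 h2
  by_cases ha : i + k ≤ mm k K <;> by_cases hb : j + k ≤ mm k K <;>
    simp only [if_pos, if_neg, ha, hb, if_true, if_false] at h1 h2 <;> omega


/-- Killing all layouts with at least one queue: the thick twist `Z` part. -/
lemma no_layout_q {s : ℕ} (hs : s < k) : ¬ (MG k K hk hK).HasLayout s (k - s) := by
  rintro ⟨c, hbd, hc⟩
  have hsq : s + (k - s) = k := by omega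
  -- each group has an edge on a stack page
  have step1 : ∀ g, g < k → ∃ r, r < k + 1 ∧ c (eZ k K g r) < s := by
    intro g hg
    by_contra hcon
    push_neg at hcon
    -- all k+1 edges of group g are on the k-s queue pages; pigeonhole
    have hmap : ∀ r ∈ Finset.range (k + 1), c (eZ k K g r) ∈ Finset.Ico s k := by
      intro r hr
      rw [Finset.mem_range] at hr
      have h1 := hcon r hr
      have h2 := hbd _ (eZ_mem hk hK hg hr)
      rw [Finset.mem_Ico]
      omega
    have hcard : (Finset.Ico s k).card < (Finset.range (k + 1)).card := by
      rw [Nat.card_Ico, Finset.card_range]; omega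
    obtain ⟨r, hr, r', hr', hne, heq⟩ :=
      Finset.exists_ne_map_eq_of_card_lt_of_maps_to hcard hmap
    rw [Finset.mem_range] at hr hr'
    have hmem := eZ_mem (K := K) hk hK hg hr
    have hmem' := eZ_mem (K := K) hk hK hg hr'
    have := (hc _ hmem _ hmem' heq).2 (by have := hcon r hr; omega)
    exact this (zNest hk hK hg hr hr' hne)
  -- select a stack edge from each group; pigeonhole the k groups onto s stacks
  have step1' : ∀ g, ∃ r, g < k → (r < k + 1 ∧ c (eZ k K g r) < s) := by
    intro g
    by_cases hg : g < k
    · obtain ⟨r, h1, h2⟩ := step1 g hg; exact ⟨r, fun _ => ⟨h1, h2⟩⟩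
    · exact ⟨0, fun h => absurd h hg⟩
  choose rsel hrsel using step1'
  have hmap2 : ∀ g ∈ Finset.range k, c (eZ k K g (rsel g)) ∈ Finset.range s := by
    intro g hg
    rw [Finset.mem_range] at hg ⊢
    exact (hrsel g hg).2
  have hcard2 : (Finset.range s).card < (Finset.range k).card := by
    simp [Finset.card_range]; omega
  obtain ⟨g, hg, g', hg', hne, heq⟩ :=
    Finset.exists_ne_map_eq_of_card_lt_of_maps_to hcard2 hmap2
  rw [Finset.mem_range] at hg hg'
  have h1 := hrsel g hg
  have h2 := hrsel g' hg'
  have hmem := eZ_mem (K := K) hk hK hg h1.1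
  have hmem' := eZ_mem (K := K) hk hK hg' h2.1
  have := (hc _ hmem _ hmem' heq).1 h1.2
  exact this (zCross hk hK hg hg' h1.1 h2.1 hne)

omit hk hK in
lemma mod2cases {x m : ℕ} (hm : 0 < m) (h : x < 2 * m) :
    x % m = x ∨ (m ≤ x ∧ x % m = x - m) := by
  rcases Nat.lt_or_ge x m with h1 | h1
  · exact Or.inl (Nat.mod_eq_of_lt h1)
  · right
    refine ⟨h1, ?_⟩
    rw [Nat.mod_eq_sub_mod h1, Nat.mod_eq_of_lt (by omega)]

/-- Killing the all-stack layout: the long cycle-power `Y` part. -/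
lemma no_layout_s : ¬ (MG k K hk hK).HasLayout k 0 := by
  rintro ⟨c, hbd, hc⟩
  have hm := hm2 (K := K) hk hK
  set m := mm k K with hmdef
  -- color classes of Y edges
  set Sp : ℕ → Finset ℕ := fun p => (Finset.range m).filter (fun i => c (eY k K i) = p) with hSp
  -- each class has at most K elements
  have hclass : ∀ p, (Sp p).card ≤ K := by
    intro p
    have hinj : ∀ x ∈ Sp p ×ˢ Finset.range k, ∀ y ∈ Sp p ×ˢ Finset.range k,
        (x.1 + x.2) % m = (y.1 + y.2) % m → x = y := by
      rintro ⟨i, j⟩ hx ⟨i', j'⟩ hy hxy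
      obtain ⟨hxi, hxj⟩ := Finset.mem_product.mp hx
      obtain ⟨hyi, hyj⟩ := Finset.mem_product.mp hy
      dsimp only at hxi hxj hyi hyj hxy ⊢
      rw [hSp, Finset.mem_filter, Finset.mem_range] at hxi hyi
      rw [Finset.mem_range] at hxj hyj
      have hmij : i + j < 2 * m := by omega
      have hmij' : i' + j' < 2 * m := by omega
      have hd1 := mod2cases (by omega : 0 < m) hmij
      have hd2 := mod2cases (by omega : 0 < m) hmij'
      by_cases hii : i = i'
      · subst hii
        have : j = j' := by omega
        rw [this]
      · exfalso
        have hcross : Cross (eY k K i) (eY k K i') := by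
          apply crossY_of hk hK hii hxi.1 hyi.1
          omega
        have hpage : c (eY k K i) = c (eY k K i') := by rw [hxi.2, hyi.2]
        have := (hc _ (eY_mem hk hK hxi.1) _ (eY_mem hk hK hyi.1) hpage).1
          (by have := hbd _ (eY_mem hk hK hxi.1); omega)
        exact this hcross
    have hmapsto : ∀ x ∈ Sp p ×ˢ Finset.range k, (x.1 + x.2) % m ∈ Finset.range m := by
      intro x hx
      rw [Finset.mem_range]
      exact Nat.mod_lt _ (by omega)
    have hcard := Finset.card_le_card_of_injOn _ hmapsto (fun x hx y hy h => hinj x hx y hy h)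
    rw [Finset.card_product, Finset.card_range, Finset.card_range] at hcard
    -- (Sp p).card * k ≤ m = k * K + 1  ⇒  (Sp p).card ≤ K
    by_contra hcon
    push_neg at hcon
    have h1 : (K + 1) * k ≤ (Sp p).card * k := Nat.mul_le_mul_right k hcon
    have h2 : (K + 1) * k = K * k + k := by ring
    have h3 : m = k * K + 1 := rfl
    have h4 : K * k = k * K := Nat.mul_comm K k
    omega
  -- all of range m is covered by the k classes
  have hcov : Finset.range m ⊆ (Finset.range k).biUnion Sp := by
    intro i hi
    rw [Finset.mem_range] at hi
    apply Finset.mem_biUnion.mpr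
    refine ⟨c (eY k K i), ?_, ?_⟩
    · rw [Finset.mem_range]
      have := hbd _ (eY_mem hk hK hi)
      omega
    · rw [hSp, Finset.mem_filter, Finset.mem_range]
      exact ⟨hi, rfl⟩
  have hcount : m ≤ k * K := by
    calc m = (Finset.range m).card := (Finset.card_range m).symm
    _ ≤ ((Finset.range k).biUnion Sp).card := Finset.card_le_card hcov
    _ ≤ ∑ p ∈ Finset.range k, (Sp p).card := Finset.card_biUnion_le
    _ ≤ (Finset.range k).card • K := Finset.sum_le_card_nsmul _ _ _ (fun p _ => hclass p)
    _ = k * K := by rw [Finset.card_range, smul_eq_mul]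
  have : m = k * K + 1 := rfl
  omega


omit hk hK in
lemma layout_pad {G : OGraph} {s q q' : ℕ} (h : G.HasLayout s q) (hq : q ≤ q') :
    G.HasLayout s q' := by
  obtain ⟨c, hbd, hc⟩ := h
  exact ⟨c, fun e he => lt_of_lt_of_le (hbd e he) (by omega), hc⟩

omit hk hK in
lemma layout_trivial (G : OGraph) : G.HasLayout (G.n * G.n) 0 := by
  refine ⟨fun e => (e.1 : ℕ) * G.n + (e.2 : ℕ), fun e he => ?_, fun e he f hf hef => ?_⟩
  · have h1 : (e.1 : ℕ) + 1 ≤ G.n := e.1.isLt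
    have h2 : (e.2 : ℕ) < G.n := e.2.isLt
    calc (e.1 : ℕ) * G.n + (e.2 : ℕ) < (e.1 : ℕ) * G.n + G.n := by omega
    _ = ((e.1 : ℕ) + 1) * G.n := by ring
    _ ≤ G.n * G.n := by
        rw [Nat.add_zero]
        exact Nat.mul_le_mul_right _ h1
  · dsimp only at hef
    have hef2 : e = f := by
      have h2 : (e.2 : ℕ) < G.n := e.2.isLt
      have h2' : (f.2 : ℕ) < G.n := f.2.isLt
      have h1 : (e.1 : ℕ) = (f.1 : ℕ) := by
        by_contra hne
        rcases Nat.lt_or_ge (e.1 : ℕ) (f.1 : ℕ) with h | h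
        · have : ((e.1 : ℕ) + 1) * G.n ≤ (f.1 : ℕ) * G.n := Nat.mul_le_mul_right _ (by omega)
          have he' : ((e.1 : ℕ) + 1) * G.n = (e.1 : ℕ) * G.n + G.n := by ring
          omega
        · have : (e.1:ℕ) ≠ (f.1:ℕ) := hne
          have hlt : (f.1 : ℕ) < (e.1 : ℕ) := by omega
          have : ((f.1 : ℕ) + 1) * G.n ≤ (e.1 : ℕ) * G.n := Nat.mul_le_mul_right _ (by omega)
          have he' : ((f.1 : ℕ) + 1) * G.n = (f.1 : ℕ) * G.n + G.n := by ring
          omega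
      have h2'' : (e.2 : ℕ) = (f.2 : ℕ) := by rw [h1] at hef; omega
      exact Prod.ext (Fin.ext h1) (Fin.ext h2'')
    subst hef2
    constructor
    · intro _
      unfold Cross
      simp only [Fin.lt_def]
      omega
    · intro _
      unfold Nest
      simp only [Fin.lt_def]
      omega

omit hk hK in
lemma mn_le_of_layout {G : OGraph} {s q : ℕ} (h : G.HasLayout s q) : G.mn ≤ s + q :=
  Nat.sInf_le ⟨s, q, rfl, h⟩

omit hk hK in
lemma lt_mn_of_no_layout {G : OGraph} {k : ℕ}
    (h : ∀ s q, s + q ≤ k → ¬ G.HasLayout s q) : k < G.mn := by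
  by_contra hcon
  push_neg at hcon
  have hne : {m | ∃ s q, s + q = m ∧ G.HasLayout s q}.Nonempty :=
    ⟨G.n * G.n, G.n * G.n, 0, by omega, layout_trivial G⟩
  obtain ⟨s, q, hsq, hl⟩ := Nat.sInf_mem hne
  exact h s q (by unfold OGraph.mn at hcon; omega) hl

/-- the mixed page number of the construction exceeds `k` -/
lemma MG_mn : k < (MG k K hk hK).mn := by
  apply lt_mn_of_no_layout
  intro s q hsq hl
  rcases Nat.lt_or_ge s k with hs | hs
  · exact no_layout_q hk hK hs (layout_pad hl (by omega))
  · have hsk : s = k ∧ q = 0 := by omega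
    rw [hsk.1, hsk.2] at hl
    exact no_layout_s hk hK hl


/-- the color of the `i`-th Y-edge when the coloring is anchored at missing edge `v₀` -/
def ycol (k K v₀ i : ℕ) : ℕ := ((i + (mm k K - 1 - v₀)) % mm k K) % k

lemma key_col {v₀ i j : ℕ} (hv₀ : v₀ < mm k K) (hi : i < mm k K) (hj : j < mm k K)
    (hiv : i ≠ v₀) (hjv : j ≠ v₀) (hij : i < j)
    (hd : j < i + k ∨ i + mm k K < j + k) :
    ycol k K v₀ i ≠ ycol k K v₀ j := by
  obtain ⟨K', rfl⟩ : ∃ K', K = K' + 1 := ⟨K - 1, by omega⟩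
  intro hcol
  unfold ycol at hcol
  have hmval : mm k (K' + 1) = k * K' + k + 1 := by unfold mm; ring
  obtain ⟨m, hM⟩ : ∃ m, mm k (K' + 1) = m := ⟨_, rfl⟩
  rw [hM] at hcol hmval hv₀ hi hj hd
  have hm0 : 0 < m := by omega
  have hc1 := mod2cases hm0 (show i + (m - 1 - v₀) < 2 * m by omega)
  have hc2 := mod2cases hm0 (show j + (m - 1 - v₀) < 2 * m by omega)
  have hA : (i + (m - 1 - v₀)) % m < m := Nat.mod_lt _ hm0
  have hB : (j + (m - 1 - v₀)) % m < m := Nat.mod_lt _ hm0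
  have hdvd : (∃ c, (j + (m - 1 - v₀)) % m - (i + (m - 1 - v₀)) % m = k * c ∧
        (i + (m - 1 - v₀)) % m ≤ (j + (m - 1 - v₀)) % m) ∨
      (∃ c, (i + (m - 1 - v₀)) % m - (j + (m - 1 - v₀)) % m = k * c ∧
        (j + (m - 1 - v₀)) % m ≤ (i + (m - 1 - v₀)) % m) := by
    rcases Nat.le_total ((i + (m - 1 - v₀)) % m) ((j + (m - 1 - v₀)) % m) with h | h
    · obtain ⟨c, hc⟩ := (Nat.modEq_iff_dvd' h).mp hcol
      exact Or.inl ⟨c, hc, h⟩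
    · obtain ⟨c, hc⟩ := (Nat.modEq_iff_dvd' h).mp hcol.symm
      exact Or.inr ⟨c, hc, h⟩
  rcases hdvd with ⟨c, hc, hab⟩ | ⟨c, hc, hab⟩ <;>
  · have e1 : k * c ≤ k * K' ∨ k * K' + k ≤ k * c := by
      rcases le_or_gt c K' with h | h
      · exact Or.inl (Nat.mul_le_mul_left k h)
      · right
        have h2 : k * (K' + 1) ≤ k * c := Nat.mul_le_mul_left k h
        have h3 : k * (K' + 1) = k * K' + k := by ring
        omega
    have e2 : k * c = 0 ∨ k ≤ k * c := by
      rcases Nat.eq_zero_or_pos c with rfl | h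
      · left; omega
      · right; exact Nat.le_mul_of_pos_right k h
    omega

/-- decode a Y-edge to its index -/
def ydec (k K : ℕ) (e : Fin (nn k K) × Fin (nn k K)) : ℕ :=
  if (e.1 : ℕ) % 2 = 0 then (e.1 : ℕ) / 2 else (e.2 : ℕ) / 2

/-- the subset coloring -/
def scol (k K v₀ : ℕ) (e : Fin (nn k K) × Fin (nn k K)) : ℕ :=
  if (e.2 : ℕ) < 2 * mm k K then ycol k K v₀ (ydec k K e)
  else ((e.1 : ℕ) - 2 * mm k K) / (k + 1)

lemma scol_eY {v₀ i : ℕ} (hi : i < mm k K) : scol k K v₀ (eY k K i) = ycol k K v₀ i := by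
  have hm := hm2 (K := K) hk hK
  have h2 := yr_lt hk hK hi
  unfold scol ydec
  rw [eY_fst hk hK hi, eY_snd hk hK hi, if_pos h2]
  congr 1
  unfold yl yr
  by_cases h : i + k ≤ mm k K
  · simp only [if_pos h]
    rw [if_pos (by omega : 2 * i % 2 = 0)]
    omega
  · simp only [if_neg h]
    rw [if_neg (show ¬ ((2 * i + (2 * k - 1) - 2 * mm k K) % 2 = 0) by omega)]
    omega

lemma scol_eZ {v₀ g r : ℕ} (hg : g < k) (hr : r < k + 1) : scol k K v₀ (eZ k K g r) = g := by
  unfold scol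
  rw [eZ_fst hk hK hg hr, eZ_snd hk hK hg hr]
  have : ¬ (zr k K g r < 2 * mm k K) := by unfold zr; omega
  rw [if_neg this]
  unfold zl
  rw [Nat.add_sub_cancel_left, Nat.mul_add_div (by omega), Nat.div_eq_of_lt hr, Nat.add_zero]

lemma scol_lt {v₀ : ℕ} {e : Fin (nn k K) × Fin (nn k K)} (he : e ∈ EE k K) :
    scol k K v₀ e < k := by
  rcases mem_EE hk hK he with ⟨i, hi, rfl⟩ | ⟨g, hg, r, hr, rfl⟩
  · rw [scol_eY hk hK hi]; unfold ycol; exact Nat.mod_lt _ (by omega)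
  · rw [scol_eZ hk hK hg hr]; exact hg

omit hk hK in
lemma not_cross_self {n : ℕ} (e : Fin n × Fin n) : ¬ Cross e e := by
  unfold Cross; simp only [Fin.lt_def]; omega

/-- validity of the subset coloring -/
lemma scol_valid {S : Finset (Fin (nn k K) × Fin (nn k K))} (hS : S ⊆ EE k K)
    {v₀ : ℕ} (hv₀ : v₀ < mm k K) (hnv : eY k K v₀ ∉ S) :
    ∀ e ∈ S, ∀ f ∈ S, scol k K v₀ e = scol k K v₀ f → ¬ Cross e f := by
  have hYv : ∀ {i : ℕ}, i < mm k K → eY k K i ∈ S → i ≠ v₀ := by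
    intro i hi hmem heq
    rw [heq] at hmem
    exact hnv hmem
  -- helper for the Y-Y case with i < j
  have hYY : ∀ {i j : ℕ}, i < mm k K → j < mm k K → i < j → i ≠ v₀ → j ≠ v₀ →
      scol k K v₀ (eY k K i) = scol k K v₀ (eY k K j) → ¬ Cross (eY k K i) (eY k K j) := by
    intro i j hi hj hij hiv hjv hcol hcr
    rw [scol_eY hk hK hi, scol_eY hk hK hj] at hcol
    exact key_col hk hK hv₀ hi hj hiv hjv hij ((crossY_iff hk hK hij hj).mp hcr) hcol
  intro e he f hf hcol
  rcases mem_EE hk hK (hS he) with ⟨i, hi, rfl⟩ | ⟨g, hg, r, hr, rfl⟩ <;>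
    rcases mem_EE hk hK (hS hf) with ⟨j, hj, rfl⟩ | ⟨g', hg', r', hr', rfl⟩
  · -- Y Y
    rcases lt_trichotomy i j with h | h | h
    · exact hYY hi hj h (hYv hi he) (hYv hj hf) hcol
    · subst h; exact not_cross_self _
    · intro hcr
      exact hYY hj hi h (hYv hj hf) (hYv hi he) hcol.symm (cross_symm hcr)
  · exact (sepYZ hk hK hi hg' hr').1
  · intro hcr
    exact (sepYZ hk hK hj hg hr).1 (cross_symm hcr)
  · -- Z Z
    rw [scol_eZ hk hK hg hr, scol_eZ hk hK hg' hr'] at hcol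
    subst hcol
    by_cases hrr : r = r'
    · subst hrr; exact not_cross_self _
    · exact nest_not_cross (zNest hk hK hg hr hr' hrr)

/-- if a subset has fewer than `m` edges, some Y-edge is missing -/
lemma exists_missing {S : Finset (Fin (nn k K) × Fin (nn k K))}
    (hcard : S.card < mm k K) : ∃ v₀ < mm k K, eY k K v₀ ∉ S := by
  by_contra hcon
  push_neg at hcon
  have hsub : (Finset.range (mm k K)).image (eY k K) ⊆ S := by
    intro e he
    obtain ⟨i, hi, rfl⟩ := Finset.mem_image.mp he
    exact hcon i (Finset.mem_range.mp hi)
  have hcard2 : ((Finset.range (mm k K)).image (eY k K)).card = mm k K := by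
    rw [Finset.card_image_of_injOn, Finset.card_range]
    intro i hi j hj h
    exact eY_injOn hk hK (Finset.mem_range.mp hi) (Finset.mem_range.mp hj) h
  have := Finset.card_le_card hsub
  omega


end params

section sub
variable (M : OGraph) (S : Finset (Fin M.n × Fin M.n))

/-- vertices touched by the edge subset `S` -/
def subT : Finset (Fin M.n) := S.biUnion (fun e => {e.1, e.2})

/-- order isomorphism from `Fin` onto the touched vertices -/
noncomputable def subIso : Fin (subT M S).card ≃o {x // x ∈ subT M S} :=
  (subT M S).orderIsoOfFin rfl

lemma mem_subT_left {e : Fin M.n × Fin M.n} (he : e ∈ S) : e.1 ∈ subT M S :=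
  Finset.mem_biUnion.mpr ⟨e, he, by simp⟩

lemma mem_subT_right {e : Fin M.n × Fin M.n} (he : e ∈ S) : e.2 ∈ subT M S :=
  Finset.mem_biUnion.mpr ⟨e, he, by simp⟩

/-- remap an edge of `S` into `Fin (subT M S).card` coordinates -/
noncomputable def reE (e : {x // x ∈ S}) :
    Fin (subT M S).card × Fin (subT M S).card :=
  ((subIso M S).symm ⟨e.1.1, mem_subT_left M S e.2⟩,
   (subIso M S).symm ⟨e.1.2, mem_subT_right M S e.2⟩)

lemma symm_lt_iff {a b : {x // x ∈ subT M S}} :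
    (subIso M S).symm a < (subIso M S).symm b ↔ (a : Fin M.n) < (b : Fin M.n) := by
  rw [(subIso M S).symm.lt_iff_lt]
  exact Subtype.coe_lt_coe.symm

/-- the sub-ordered-matching induced by an edge subset -/
noncomputable def subO (hS : S ⊆ M.E) : OGraph where
  n := (subT M S).card
  E := S.attach.image (reE M S)
  lt_of_mem := by
    intro f hf
    obtain ⟨e, -, rfl⟩ := Finset.mem_image.mp hf
    rw [reE, symm_lt_iff]
    exact M.lt_of_mem e.1 (hS e.2)

lemma subO_matching (hS : S ⊆ M.E) (hM : M.IsMatching) : (subO M S hS).IsMatching := by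
  intro w
  set v : {x // x ∈ subT M S} := (subIso M S) w with hv
  obtain ⟨e₀, he₀, hve⟩ := Finset.mem_biUnion.mp v.2
  simp only [Finset.mem_insert, Finset.mem_singleton] at hve
  -- (v : Fin M.n) = e₀.1 ∨ = e₀.2
  have htouch : e₀.1 = (v : Fin M.n) ∨ e₀.2 = (v : Fin M.n) := by
    rcases hve with h | h
    · exact Or.inl h.symm
    · exact Or.inr h.symm
  have hmemw : ∀ (e : {x // x ∈ S}), ((reE M S e).1 = w ∨ (reE M S e).2 = w) ↔
      (e.1.1 = (v : Fin M.n) ∨ e.1.2 = (v : Fin M.n)) := by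
    intro e
    rw [reE]
    constructor
    · rintro (h | h)
      · left
        have := congrArg (subIso M S) h
        rw [OrderIso.apply_symm_apply, ← hv] at this
        exact congrArg Subtype.val this
      · right
        have := congrArg (subIso M S) h
        rw [OrderIso.apply_symm_apply, ← hv] at this
        exact congrArg Subtype.val this
    · rintro (h | h)
      · left
        refine (OrderIso.symm_apply_eq _).mpr ?_; rw [← hv]
        exact Subtype.ext h
      · right
        refine (OrderIso.symm_apply_eq _).mpr ?_; rw [← hv]
        exact Subtype.ext h
  apply degree_eq_one (e := reE M S ⟨e₀, he₀⟩)
  · exact Finset.mem_image_of_mem _ (Finset.mem_attach _ _)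
  · exact (hmemw ⟨e₀, he₀⟩).mpr htouch
  · intro f hf htf
    obtain ⟨e₁, -, rfl⟩ := Finset.mem_image.mp hf
    have h₁ := (hmemw e₁).mp htf
    have : e₁.1 = e₀ := touch_unique hM (hS e₁.2) h₁ (hS he₀) htouch
    have he : e₁ = ⟨e₀, he₀⟩ := Subtype.ext this
    rw [he]

lemma subO_layout (hS : S ⊆ M.E) {kk : ℕ} (col : Fin M.n × Fin M.n → ℕ)
    (hbd : ∀ e ∈ S, col e < kk)
    (hvalid : ∀ e ∈ S, ∀ f ∈ S, col e = col f → ¬ Cross e f) :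
    (subO M S hS).HasLayout kk 0 := by
  refine ⟨fun p => col ((((subIso M S) p.1) : Fin M.n), (((subIso M S) p.2) : Fin M.n)),
    ?_, ?_⟩
  · intro e he
    obtain ⟨e₁, -, rfl⟩ := Finset.mem_image.mp he
    simp only [reE, OrderIso.apply_symm_apply]
    have : ((e₁.1.1 : Fin M.n), e₁.1.2) = e₁.1 := rfl
    rw [this]
    have := hbd e₁.1 e₁.2
    omega
  · intro e he f hf hcol
    obtain ⟨e₁, -, rfl⟩ := Finset.mem_image.mp he
    obtain ⟨f₁, -, rfl⟩ := Finset.mem_image.mp hf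
    simp only [reE, OrderIso.apply_symm_apply] at hcol ⊢
    have he2 : ((e₁.1.1 : Fin M.n), e₁.1.2) = e₁.1 := rfl
    have hf2 : ((f₁.1.1 : Fin M.n), f₁.1.2) = f₁.1 := rfl
    rw [he2, hf2] at hcol
    constructor
    · intro _ hcr
      have : Cross e₁.1 f₁.1 := by
        unfold Cross at hcr ⊢
        simp only [symm_lt_iff M S] at hcr
        rcases hcr with ⟨a, b, c⟩ | ⟨a, b, c⟩
        · exact Or.inl ⟨(symm_lt_iff M S).mp a, (symm_lt_iff M S).mp b, (symm_lt_iff M S).mp c⟩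
        · exact Or.inr ⟨(symm_lt_iff M S).mp a, (symm_lt_iff M S).mp b, (symm_lt_iff M S).mp c⟩
      exact hvalid e₁.1 e₁.2 f₁.1 f₁.2 hcol this
    · intro hle
      have := hbd e₁.1 e₁.2
      rw [he2] at *
      exfalso
      omega

end sub


end Construction

/-- For every `k ≥ 2`: if `𝒫` is a set of patterns such that
an ordered matching has mixed page number at most `k` iff it avoids every
pattern of `𝒫`, then `𝒫` is infinite. -/
theorem obstruction_set_infinite (k : ℕ) (hk : 2 ≤ k) (P : Set OGraph)
    (hpat : ∀ H ∈ P, H.E.Nonempty)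
    (hchar : ∀ M : OGraph, M.IsMatching →
      (M.mn ≤ k ↔ ∀ H ∈ P, ¬ Contains M H)) :
    P.Infinite := by
  by_contra hinf
  have hfin : P.Finite := Set.not_infinite.mp hinf
  set N₀ := hfin.toFinset.sup OGraph.n with hN
  set K := N₀ + k + 1 with hKdef
  have hK : k + 1 ≤ K := by omega
  set M := Construction.MG k K hk hK with hMdef
  have hmatch : M.IsMatching := Construction.MG_matching hk hK
  have hmn : k < M.mn := Construction.MG_mn hk hK
  have hcontains : ∃ H ∈ P, Contains M H := by
    by_contra hcon
    push_neg at hcon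
    exact absurd ((hchar M hmatch).mpr hcon) (by omega)
  obtain ⟨H, hHP, φ, hφmono, hφedge⟩ := hcontains
  have hHn : H.n ≤ N₀ := Finset.le_sup (hfin.mem_toFinset.mpr hHP)
  set Φ : Finset (Fin M.n) := Finset.image φ Finset.univ with hΦ
  set S : Finset (Fin M.n × Fin M.n) := M.E.filter (fun e => e.1 ∈ Φ ∨ e.2 ∈ Φ) with hSdef
  have hSE : S ⊆ M.E := Finset.filter_subset _ _
  have hScard : S.card ≤ N₀ := by
    have h1 : S.card ≤ Φ.card := by
      apply Finset.card_le_card_of_injOn (fun e => if e.1 ∈ Φ then e.1 else e.2)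
      · intro e he
        obtain ⟨-, h2⟩ := Finset.mem_filter.mp he
        rcases h2 with h | h
        · dsimp only; rw [if_pos h]; exact h
        · by_cases h' : e.1 ∈ Φ
          · dsimp only; rw [if_pos h']; exact h'
          · dsimp only; rw [if_neg h']; exact h
      · intro e he f hf heq
        have heE : e ∈ M.E := hSE (Finset.mem_coe.mp he)
        have hfE : f ∈ M.E := hSE (Finset.mem_coe.mp hf)
        dsimp only at heq
        have hetouch : e.1 = (if e.1 ∈ Φ then e.1 else e.2) ∨
            e.2 = (if e.1 ∈ Φ then e.1 else e.2) := by
          by_cases h : e.1 ∈ Φ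
          · left; rw [if_pos h]
          · right; rw [if_neg h]
        have hftouch : f.1 = (if e.1 ∈ Φ then e.1 else e.2) ∨
            f.2 = (if e.1 ∈ Φ then e.1 else e.2) := by
          rw [heq]
          by_cases h : f.1 ∈ Φ
          · left; rw [if_pos h]
          · right; rw [if_neg h]
        exact touch_unique hmatch heE hetouch hfE hftouch
    have h2 : Φ.card ≤ H.n := by
      calc Φ.card ≤ (Finset.univ : Finset (Fin H.n)).card := Finset.card_image_le
      _ = H.n := by rw [Finset.card_univ, Fintype.card_fin]
    omega
  have hmm : N₀ < Construction.mm k K := by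
    have h1 : K ≤ k * K := Nat.le_mul_of_pos_left K (by omega)
    unfold Construction.mm
    omega
  obtain ⟨v₀, hv₀, hnv⟩ := Construction.exists_missing hk hK
    (show S.card < Construction.mm k K by omega)
  have hbd : ∀ e ∈ S, Construction.scol k K v₀ e < k :=
    fun e he => Construction.scol_lt hk hK (hSE he)
  have hvalid := Construction.scol_valid hk hK hSE hv₀ hnv
  set M' := Construction.subO M S hSE with hM'def
  have hM'match : M'.IsMatching := Construction.subO_matching M S hSE hmatch
  have hlay : M'.HasLayout k 0 :=
    Construction.subO_layout M S hSE (Construction.scol k K v₀) hbd hvalid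
  have hmn' : M'.mn ≤ k := by
    have := Construction.mn_le_of_layout hlay
    omega
  have havoid := (hchar M' hM'match).mp hmn'
  apply havoid H hHP
  -- `M'` still contains the pattern `H`
  have hT : ∀ v : Fin H.n, φ v ∈ Construction.subT M S := by
    intro v
    obtain ⟨e, heE, hev⟩ := touch_exists hmatch (φ v)
    have heS : e ∈ S := by
      rw [hSdef]
      refine Finset.mem_filter.mpr ⟨heE, ?_⟩
      rcases hev with h | h
      · left; rw [h]; exact Finset.mem_image_of_mem φ (Finset.mem_univ v)
      · right; rw [h]; exact Finset.mem_image_of_mem φ (Finset.mem_univ v)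
    rcases hev with h | h
    · exact h ▸ Construction.mem_subT_left M S heS
    · exact h ▸ Construction.mem_subT_right M S heS
  refine ⟨fun v => (Construction.subIso M S).symm ⟨φ v, hT v⟩, ?_, ?_⟩
  · intro a b hab
    exact (Construction.symm_lt_iff M S).mpr (hφmono hab)
  · intro e he
    have heS : (φ e.1, φ e.2) ∈ S := by
      rw [hSdef]
      exact Finset.mem_filter.mpr ⟨hφedge e he,
        Or.inl (Finset.mem_image_of_mem φ (Finset.mem_univ e.1))⟩
    show _ ∈ (Construction.subO M S hSE).E
    refine Finset.mem_image.mpr ⟨⟨(φ e.1, φ e.2), heS⟩, Finset.mem_attach _ _, ?_⟩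
    rfl

end MixedLayouts
end

section
/- For every integer k ≥ 2 and for every n, there exists a k-critical ordered matching with more than n vertices. In particular, for every k ≥ 2 there exist infinitely many k-critical ordered matchings. -/
namespace MixedLayouts

/-! ### Auxiliary development -/

namespace OGraph

section Basics

lemma cross_self_false {n : ℕ} (e : Fin n × Fin n) : ¬ Cross e e := by
  simp only [Cross, Fin.lt_def]; omega

lemma nest_self_false {n : ℕ} (e : Fin n × Fin n) : ¬ Nest e e := by
  simp only [Nest, Fin.lt_def]; omega

lemma nest_not_cross {n : ℕ} {e f : Fin n × Fin n} (h : Nest e f) : ¬ Cross e f := by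
  simp only [Nest, Cross, Fin.lt_def] at *; omega

lemma cross_not_nest {n : ℕ} {e f : Fin n × Fin n} (h : Cross e f) : ¬ Nest e f := by
  simp only [Nest, Cross, Fin.lt_def] at *; omega

lemma cross_comm {n : ℕ} {e f : Fin n × Fin n} (h : Cross e f) : Cross f e := by
  simp only [Cross, Fin.lt_def] at *; omega

lemma nest_comm {n : ℕ} {e f : Fin n × Fin n} (h : Nest e f) : Nest f e := by
  simp only [Nest, Fin.lt_def] at *; omega

lemma sep_not_cross {n : ℕ} {e f : Fin n × Fin n} (h : (e.2 : ℕ) < (f.1 : ℕ))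
    (hf : (f.1 : ℕ) < (f.2 : ℕ)) : ¬ Cross e f := by
  simp only [Cross, Fin.lt_def]; omega

lemma sep_not_nest {n : ℕ} {e f : Fin n × Fin n} (h : (e.2 : ℕ) < (f.1 : ℕ))
    (he : (e.1 : ℕ) < (e.2 : ℕ)) (hf : (f.1 : ℕ) < (f.2 : ℕ)) : ¬ Nest e f := by
  simp only [Nest, Fin.lt_def]; omega

lemma HasLayout.mono {G : OGraph} {s q s' q' : ℕ} (h : G.HasLayout s q)
    (hs : s ≤ s') (hq : q ≤ q') : G.HasLayout s' q' := by
  obtain ⟨c, hlt, hcond⟩ := h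
  refine ⟨fun e => if c e < s then c e else c e + (s' - s), fun e he => ?_, ?_⟩
  · have := hlt e he; dsimp only; split <;> omega
  · intro e he f hf hc
    have h1 := hcond e he f hf
    by_cases h2 : c e < s <;> by_cases h3 : c f < s <;>
      simp only [h2, h3, if_pos, if_neg, if_true, if_false] at hc ⊢
    · exact ⟨fun _ => (h1 hc).1 h2, fun hle => by omega⟩
    · omega
    · omega
    · have hcc : c e = c f := by omega
      exact ⟨fun hlt' => by omega, fun _ => (h1 hcc).2 (by omega)⟩

lemma exists_layout (G : OGraph) : G.HasLayout 0 (G.n * G.n + 1) := by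
  refine ⟨fun e => (e.1 : ℕ) * G.n + (e.2 : ℕ), fun e he => ?_, ?_⟩
  · have h1 : (e.1 : ℕ) < G.n := e.1.isLt
    have h2 : (e.2 : ℕ) < G.n := e.2.isLt
    calc (e.1 : ℕ) * G.n + (e.2 : ℕ) < (e.1 : ℕ) * G.n + G.n := by omega
    _ = ((e.1 : ℕ) + 1) * G.n := by ring
    _ ≤ G.n * G.n := Nat.mul_le_mul_right _ h1
    _ < 0 + (G.n * G.n + 1) := by omega
  · intro e he f hf hc
    have h2 : (e.2 : ℕ) < G.n := e.2.isLt
    have h4 : (f.2 : ℕ) < G.n := f.2.isLt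
    dsimp only at hc
    have hef : e = f := by
      have h1 : (e.1 : ℕ) = (f.1 : ℕ) := by
        rcases lt_trichotomy ((e.1 : ℕ)) ((f.1 : ℕ)) with h' | h' | h'
        · exfalso
          have : ((e.1 : ℕ) + 1) * G.n ≤ (f.1 : ℕ) * G.n := Nat.mul_le_mul_right _ h'
          nlinarith
        · exact h'
        · exfalso
          have : ((f.1 : ℕ) + 1) * G.n ≤ (e.1 : ℕ) * G.n := Nat.mul_le_mul_right _ h'
          nlinarith
      have he2 : (e.2 : ℕ) = (f.2 : ℕ) := by
        rw [h1] at hc; omega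
      exact Prod.ext (Fin.ext h1) (Fin.ext he2)
    subst hef
    exact ⟨fun _ => cross_self_false e, fun _ => nest_self_false e⟩

lemma mn_le {G : OGraph} {s q : ℕ} (h : G.HasLayout s q) : G.mn ≤ s + q :=
  Nat.sInf_le ⟨s, q, rfl, h⟩

lemma lt_mn {G : OGraph} {k : ℕ} (h : ∀ s q, s + q = k → ¬ G.HasLayout s q) :
    k < G.mn := by
  by_contra hle
  push_neg at hle
  have hne : {m | ∃ s q, s + q = m ∧ G.HasLayout s q}.Nonempty :=
    ⟨0 + (G.n * G.n + 1), 0, G.n * G.n + 1, rfl, G.exists_layout⟩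
  obtain ⟨s, q, hsq, hlay⟩ := Nat.sInf_mem hne
  have hsq' : s + q = G.mn := hsq
  exact h s (k - s) (by omega) (hlay.mono le_rfl (by omega))

lemma hasLayout_eqE {n : ℕ} {E₁ E₂ : Finset (Fin n × Fin n)} {h₁ h₂} (hE : E₁ = E₂)
    {s q : ℕ} : (OGraph.mk n E₁ h₁).HasLayout s q ↔ (OGraph.mk n E₂ h₂).HasLayout s q := by
  subst hE; rfl

lemma isMatching_iff {G : OGraph} : G.IsMatching ↔
    ∀ v, ∃ e, e ∈ G.E ∧ (e.1 = v ∨ e.2 = v) ∧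
      ∀ f ∈ G.E, (f.1 = v ∨ f.2 = v) → f = e := by
  unfold IsMatching degree
  refine forall_congr' fun v => ?_
  rw [Finset.card_eq_one]
  constructor
  · rintro ⟨a, ha⟩
    have h1 : a ∈ G.E.filter fun e => e.1 = v ∨ e.2 = v := ha ▸ Finset.mem_singleton_self a
    rw [Finset.mem_filter] at h1
    refine ⟨a, h1.1, h1.2, fun f hf hfv => ?_⟩
    have : f ∈ G.E.filter fun e => e.1 = v ∨ e.2 = v := Finset.mem_filter.2 ⟨hf, hfv⟩
    rw [ha, Finset.mem_singleton] at this; exact this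
  · rintro ⟨e, he, hev, hu⟩
    refine ⟨e, ?_⟩
    ext f
    simp only [Finset.mem_filter, Finset.mem_singleton]
    exact ⟨fun ⟨h1, h2⟩ => hu f h1 h2, fun h => h ▸ ⟨he, hev⟩⟩

end Basics

end OGraph
/-- The facts we need about a "core" to wrap twists around it. -/
structure CoreFacts (C : OGraph) (s : ℕ) : Prop where
  blocked : ¬ C.HasLayout s 0
  allstk : C.HasLayout (s + 1) 0
  small : ∀ s', s' < s → C.HasLayout s' (s - s')
  one_queue : C.HasLayout s 1
  del : ∀ e ∈ C.E, (C.erase e).HasLayout s 0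
section Twist

/-- A twist of `m` pairwise crossing edges. -/
def twistO (m : ℕ) : OGraph where
  n := m + m
  E := (Finset.univ : Finset (Fin m)).image fun i : Fin m =>
    ((⟨(i : ℕ), by have := i.isLt; omega⟩ : Fin (m + m)),
     (⟨m + (i : ℕ), by have := i.isLt; omega⟩ : Fin (m + m)))
  lt_of_mem := by
    intro e he
    simp only [Finset.mem_image] at he
    obtain ⟨i, -, rfl⟩ := he
    simp only [Fin.mk_lt_mk]
    have := i.isLt
    omega

/-- The `i`-th edge of the twist. -/
def twE (m : ℕ) (i : Fin m) : Fin (m + m) × Fin (m + m) :=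
  ((⟨(i : ℕ), by have := i.isLt; omega⟩ : Fin (m + m)),
   (⟨m + (i : ℕ), by have := i.isLt; omega⟩ : Fin (m + m)))

lemma twE_mem {m : ℕ} (i : Fin m) : twE m i ∈ (twistO m).E := by
  exact Finset.mem_image.2 ⟨i, Finset.mem_univ i, rfl⟩

lemma mem_twistO {m : ℕ} {e : Fin (m + m) × Fin (m + m)} (he : e ∈ (twistO m).E) :
    ∃ i : Fin m, e = twE m i := by
  obtain ⟨i, -, rfl⟩ := Finset.mem_image.1 he
  exact ⟨i, rfl⟩

lemma twE_cross {m : ℕ} {i j : Fin m} (h : (i : ℕ) < (j : ℕ)) :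
    Cross (twE m i) (twE m j) := by
  simp only [Cross, twE, Fin.mk_lt_mk]
  have := j.isLt
  omega

lemma twE_cross' {m : ℕ} {i j : Fin m} (h : i ≠ j) : Cross (twE m i) (twE m j) := by
  rcases lt_or_gt_of_ne (fun hv => h (Fin.ext hv) : (i : ℕ) ≠ (j : ℕ)) with h' | h'
  · exact twE_cross h'
  · exact OGraph.cross_comm (twE_cross h')

lemma twE_inj {m : ℕ} {i j : Fin m} (h : twE m i = twE m j) : i = j := by
  simp only [twE, Prod.mk.injEq, Fin.mk.injEq] at h
  exact Fin.ext h.1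

lemma twist_blocked (s : ℕ) : ¬ (twistO (s + 1)).HasLayout s 0 := by
  rintro ⟨c, hlt, hcond⟩
  have hb : ∀ i : Fin (s + 1), c (twE (s + 1) i) < s := by
    intro i; have := hlt _ (twE_mem i); omega
  obtain ⟨i, j, hij, hcij⟩ := Fintype.exists_ne_map_eq_of_card_lt
    (fun i : Fin (s + 1) => (⟨c (twE (s + 1) i), hb i⟩ : Fin s)) (by simp)
  have hceq : c (twE (s + 1) i) = c (twE (s + 1) j) := by
    simpa using congrArg Fin.val hcij
  exact ((hcond _ (twE_mem i) _ (twE_mem j) hceq).1 (hb i)) (twE_cross' hij)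

lemma twist_coreFacts (s : ℕ) : CoreFacts (twistO (s + 1)) s where
  blocked := twist_blocked s
  allstk := by
    refine ⟨fun e => (e.1 : ℕ), fun e he => ?_, fun e he f hf hc => ?_⟩
    · obtain ⟨i, rfl⟩ := mem_twistO he
      simp only [twE]
      have := i.isLt; omega
    · obtain ⟨i, rfl⟩ := mem_twistO he
      obtain ⟨j, rfl⟩ := mem_twistO hf
      simp only [twE] at hc
      have hij : i = j := Fin.ext hc
      subst hij
      refine ⟨fun _ => OGraph.cross_self_false _, fun h => absurd h ?_⟩
      simp only [twE]
      have := i.isLt; omega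
  small := by
    intro s' hs'
    refine ⟨fun _ => s', fun e he => by show s' < s' + (s - s'); omega,
      fun e he f hf hc => ?_⟩
    refine ⟨fun h => absurd (show s' < s' from h) (lt_irrefl s'), fun _ => ?_⟩
    obtain ⟨i, rfl⟩ := mem_twistO he
    obtain ⟨j, rfl⟩ := mem_twistO hf
    by_cases hij : i = j
    · subst hij; exact OGraph.nest_self_false _
    · exact OGraph.cross_not_nest (twE_cross' hij)
  one_queue := by
    refine ⟨fun _ => s, fun e he => by show s < s + 1; omega, fun e he f hf hc => ?_⟩
    refine ⟨fun h => absurd (show s < s from h) (lt_irrefl s), fun _ => ?_⟩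
    obtain ⟨i, rfl⟩ := mem_twistO he
    obtain ⟨j, rfl⟩ := mem_twistO hf
    by_cases hij : i = j
    · subst hij; exact OGraph.nest_self_false _
    · exact OGraph.cross_not_nest (twE_cross' hij)
  del := by
    intro e he
    obtain ⟨i0, rfl⟩ := mem_twistO he
    refine ⟨fun f => if (f.1 : ℕ) < (i0 : ℕ) then (f.1 : ℕ) else (f.1 : ℕ) - 1,
      fun f hf => ?_, fun f hf f' hf' hc => ?_⟩
    · obtain ⟨hne, hfE⟩ := Finset.mem_erase.1 hf
      obtain ⟨j, rfl⟩ := mem_twistO hfE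
      have hji : j ≠ i0 := fun h => hne (by rw [h])
      have hj : (j : ℕ) ≠ (i0 : ℕ) := fun h => hji (Fin.ext h)
      simp only [twE]
      have := j.isLt; have := i0.isLt
      show (if (j : ℕ) < (i0 : ℕ) then (j : ℕ) else (j : ℕ) - 1) < s + 0
      split <;> omega
    · obtain ⟨hne, hfE⟩ := Finset.mem_erase.1 hf
      obtain ⟨hne', hfE'⟩ := Finset.mem_erase.1 hf'
      obtain ⟨j, rfl⟩ := mem_twistO hfE
      obtain ⟨j', rfl⟩ := mem_twistO hfE'
      have hj : (j : ℕ) ≠ (i0 : ℕ) := fun h => hne (by rw [Fin.ext h])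
      have hj' : (j' : ℕ) ≠ (i0 : ℕ) := fun h => hne' (by rw [Fin.ext h])
      have hjj : j = j' := by
        simp only [twE] at hc
        change (if (j : ℕ) < (i0 : ℕ) then (j : ℕ) else (j : ℕ) - 1) =
          (if (j' : ℕ) < (i0 : ℕ) then (j' : ℕ) else (j' : ℕ) - 1) at hc
        exact Fin.ext (by split at hc <;> split at hc <;> omega)
      subst hjj
      exact ⟨fun _ => OGraph.cross_self_false _, fun _ => OGraph.nest_self_false _⟩

end Twist
section Ycore

lemma mod_two_cases {x o : ℕ} (h : x < 2 * o) :
    x % o = x ∧ x < o ∨ x % o = x - o ∧ o ≤ x := by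
  rcases Nat.lt_or_ge x o with h' | h'
  · exact Or.inl ⟨Nat.mod_eq_of_lt h', h'⟩
  · refine Or.inr ⟨?_, h'⟩
    rw [Nat.mod_eq_sub_mod h']
    exact Nat.mod_eq_of_lt (by omega)

/-- The `i`-th edge of the odd crossing-cycle `Y` (with `2t+3` edges). -/
def yE (t : ℕ) (i : Fin (2 * t + 3)) : Fin (4 * t + 6) × Fin (4 * t + 6) :=
  if h : (i : ℕ) = 2 * t + 2 then
    (⟨1, by omega⟩, ⟨4 * t + 4, by omega⟩)
  else
    (⟨2 * (i : ℕ), by have := i.isLt; omega⟩, ⟨2 * (i : ℕ) + 3, by have := i.isLt; omega⟩)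

/-- The odd crossing-cycle. -/
def YO (t : ℕ) : OGraph where
  n := 4 * t + 6
  E := Finset.univ.image (yE t)
  lt_of_mem := by
    intro e he
    simp only [Finset.mem_image] at he
    obtain ⟨i, -, rfl⟩ := he
    unfold yE
    split <;> simp only [Fin.mk_lt_mk] <;> omega

lemma yE_mem {t : ℕ} (i : Fin (2 * t + 3)) : yE t i ∈ (YO t).E := by
  exact Finset.mem_image.2 ⟨i, Finset.mem_univ i, rfl⟩

lemma mem_YO {t : ℕ} {e : Fin (4 * t + 6) × Fin (4 * t + 6)} (he : e ∈ (YO t).E) :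
    ∃ i : Fin (2 * t + 3), e = yE t i := by
  obtain ⟨i, -, rfl⟩ := Finset.mem_image.1 he
  exact ⟨i, rfl⟩

lemma yE_fst_val {t : ℕ} (i : Fin (2 * t + 3)) :
    ((yE t i).1 : ℕ) = if (i : ℕ) = 2 * t + 2 then 1 else 2 * (i : ℕ) := by
  unfold yE
  split <;> rename_i h <;> simp [h]

lemma yE_snd_val {t : ℕ} (i : Fin (2 * t + 3)) :
    ((yE t i).2 : ℕ) = if (i : ℕ) = 2 * t + 2 then 4 * t + 4 else 2 * (i : ℕ) + 3 := by
  unfold yE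
  split <;> rename_i h <;> simp [h]

/-- index decoder -/
def yIdx (t : ℕ) (e : Fin (4 * t + 6) × Fin (4 * t + 6)) : ℕ :=
  if (e.1 : ℕ) = 1 then 2 * t + 2 else (e.1 : ℕ) / 2

lemma yIdx_yE {t : ℕ} (i : Fin (2 * t + 3)) : yIdx t (yE t i) = (i : ℕ) := by
  have hi := i.isLt
  unfold yIdx
  rw [yE_fst_val]
  by_cases h : (i : ℕ) = 2 * t + 2
  · rw [if_pos h, if_pos rfl]; omega
  · rw [if_neg h, if_neg (by omega)]; omega

lemma yE_eq_of_val {t : ℕ} {i j : Fin (2 * t + 3)} (h : (i : ℕ) = (j : ℕ)) :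
    yE t i = yE t j := by
  have : i = j := Fin.ext h
  rw [this]

lemma yE_cross_adj {t : ℕ} {i j : Fin (2 * t + 3)} (h : (i : ℕ) + 1 = (j : ℕ)) :
    Cross (yE t i) (yE t j) := by
  have hi := i.isLt; have hj := j.isLt
  simp only [Cross, Fin.lt_def, yE_fst_val, yE_snd_val]
  split_ifs <;> omega

lemma yE_cross_wrap {t : ℕ} {i j : Fin (2 * t + 3)} (h0 : (i : ℕ) = 0)
    (hl : (j : ℕ) = 2 * t + 2) : Cross (yE t i) (yE t j) := by
  simp only [Cross, Fin.lt_def, yE_fst_val, yE_snd_val]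
  split_ifs <;> omega

lemma yE_not_cross {t : ℕ} {i j : Fin (2 * t + 3)}
    (h1 : (i : ℕ) + 1 ≠ (j : ℕ)) (h2 : (j : ℕ) + 1 ≠ (i : ℕ))
    (h3 : ¬((i : ℕ) = 0 ∧ (j : ℕ) = 2 * t + 2))
    (h4 : ¬((j : ℕ) = 0 ∧ (i : ℕ) = 2 * t + 2)) : ¬ Cross (yE t i) (yE t j) := by
  have hi := i.isLt; have hj := j.isLt
  simp only [Cross, Fin.lt_def, yE_fst_val, yE_snd_val]
  split_ifs <;> omega

lemma yE_not_nest_of_ne_last {t : ℕ} {i j : Fin (2 * t + 3)}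
    (hi : (i : ℕ) ≠ 2 * t + 2) (hj : (j : ℕ) ≠ 2 * t + 2) :
    ¬ Nest (yE t i) (yE t j) := by
  simp only [Nest, Fin.lt_def, yE_fst_val, yE_snd_val]
  split_ifs <;> omega

lemma yE_cross_cases {t : ℕ} {i j : Fin (2 * t + 3)} (h : Cross (yE t i) (yE t j)) :
    (i : ℕ) + 1 = (j : ℕ) ∨ (j : ℕ) + 1 = (i : ℕ) ∨
    ((i : ℕ) = 0 ∧ (j : ℕ) = 2 * t + 2) ∨ ((j : ℕ) = 0 ∧ (i : ℕ) = 2 * t + 2) := by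
  by_contra hcon
  push_neg at hcon
  obtain ⟨a1, a2, a3, a4⟩ := hcon
  exact yE_not_cross a1 a2 (fun ⟨x, y⟩ => a3 x y) (fun ⟨x, y⟩ => a4 x y) h

lemma YO_matching (t : ℕ) : (YO t).IsMatching := by
  rw [OGraph.isMatching_iff]
  intro v
  change Fin (4 * t + 6) at v
  show ∃ e : Fin (4 * t + 6) × Fin (4 * t + 6), e ∈ (YO t).E ∧ (e.1 = v ∨ e.2 = v) ∧
    ∀ f : Fin (4 * t + 6) × Fin (4 * t + 6), f ∈ (YO t).E → (f.1 = v ∨ f.2 = v) → f = e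
  have hv : (v : ℕ) < 4 * t + 6 := v.isLt
  have touch : ∀ j : Fin (2 * t + 3), ((yE t j).1 = v ∨ (yE t j).2 = v) ↔
      ((j : ℕ) = 2 * t + 2 ∧ ((v : ℕ) = 1 ∨ (v : ℕ) = 4 * t + 4)) ∨
      ((j : ℕ) ≠ 2 * t + 2 ∧ ((v : ℕ) = 2 * (j : ℕ) ∨ (v : ℕ) = 2 * (j : ℕ) + 3)) := by
    intro j
    rw [Fin.ext_iff, Fin.ext_iff, yE_fst_val, yE_snd_val]
    have hj := j.isLt
    split_ifs <;> omega
  by_cases h14 : (v : ℕ) = 1 ∨ (v : ℕ) = 4 * t + 4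
  · refine ⟨yE t ⟨2 * t + 2, by omega⟩, yE_mem _, ?_, ?_⟩
    · rw [touch]; exact Or.inl ⟨rfl, h14⟩
    · intro f hf hfv
      obtain ⟨j, rfl⟩ := mem_YO hf
      rw [touch] at hfv
      have hj := j.isLt
      refine yE_eq_of_val ?_
      rcases hfv with ⟨h, -⟩ | ⟨h, hc⟩ <;> simp only [Fin.val_mk] <;> omega
  · push_neg at h14
    by_cases hev : (v : ℕ) % 2 = 0
    · refine ⟨yE t ⟨(v : ℕ) / 2, by omega⟩, yE_mem _, ?_, ?_⟩
      · rw [touch]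
        exact Or.inr ⟨by simp only [Fin.val_mk]; omega, Or.inl (by simp only [Fin.val_mk]; omega)⟩
      · intro f hf hfv
        obtain ⟨j, rfl⟩ := mem_YO hf
        rw [touch] at hfv
        have hj := j.isLt
        refine yE_eq_of_val ?_
        rcases hfv with ⟨h, hc⟩ | ⟨h, hc⟩ <;> simp only [Fin.val_mk] <;> omega
    · refine ⟨yE t ⟨((v : ℕ) - 3) / 2, by omega⟩, yE_mem _, ?_, ?_⟩
      · rw [touch]
        exact Or.inr ⟨by simp only [Fin.val_mk]; omega, Or.inr (by simp only [Fin.val_mk]; omega)⟩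
      · intro f hf hfv
        obtain ⟨j, rfl⟩ := mem_YO hf
        rw [touch] at hfv
        have hj := j.isLt
        refine yE_eq_of_val ?_
        rcases hfv with ⟨h, hc⟩ | ⟨h, hc⟩ <;> simp only [Fin.val_mk] <;> omega

lemma Y_blocked (t : ℕ) : ¬ (YO t).HasLayout 2 0 := by
  rintro ⟨c, hlt, hcond⟩
  set d : ℕ → ℕ := fun m => if hm : m < 2 * t + 3 then c (yE t ⟨m, hm⟩) else 0 with hd_def
  have hda : ∀ i : Fin (2 * t + 3), d (i : ℕ) = c (yE t i) := by
    intro i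
    show (if hm : (i : ℕ) < 2 * t + 3 then c (yE t ⟨(i : ℕ), hm⟩) else 0) = c (yE t i)
    rw [dif_pos i.isLt, Fin.eta]
  have hb2 : ∀ m (hm : m < 2 * t + 3), d m < 2 := by
    intro m hm
    have := hda ⟨m, hm⟩
    simp only [Fin.val_mk] at this
    rw [this]
    exact hlt _ (yE_mem _)
  have key : ∀ m, m + 1 < 2 * t + 3 → d m ≠ d (m + 1) := by
    intro m hm1 hceq
    have hceq' : c (yE t ⟨m, by omega⟩) = c (yE t ⟨m + 1, hm1⟩) := by
      rw [← hda ⟨m, by omega⟩, ← hda ⟨m + 1, hm1⟩]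
      exact hceq
    exact (hcond _ (yE_mem _) _ (yE_mem _) hceq').1 (hlt _ (yE_mem _))
      (yE_cross_adj (by simp only [Fin.val_mk]))
  have par : ∀ m, m < 2 * t + 3 → d m = (d 0 + m) % 2 := by
    intro m
    induction m with
    | zero => intro h0; have := hb2 0 (by omega); omega
    | succ m ih =>
      intro hm
      have h1 := ih (by omega)
      have h2 := key m hm
      have b1 := hb2 m (by omega)
      have b2 := hb2 (m + 1) hm
      omega
  have hfin := par (2 * t + 2) (by omega)
  have b0 := hb2 0 (by omega)
  have hceq : d 0 = d (2 * t + 2) := by omega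
  have hceq' : c (yE t ⟨0, by omega⟩) = c (yE t ⟨2 * t + 2, by omega⟩) := by
    rw [← hda ⟨0, by omega⟩, ← hda ⟨2 * t + 2, by omega⟩]
    exact hceq
  exact (hcond _ (yE_mem _) _ (yE_mem _) hceq').1 (hlt _ (yE_mem _))
    (yE_cross_wrap (by simp only [Fin.val_mk]) (by simp only [Fin.val_mk]))

lemma Y_coreFacts (t : ℕ) : CoreFacts (YO t) 2 where
  blocked := Y_blocked t
  allstk := by
    refine ⟨fun e => if yIdx t e = 2 * t + 2 then 2 else yIdx t e % 2,
      fun e he => ?_, fun e he f hf hc => ?_⟩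
    · dsimp only; split <;> omega
    · obtain ⟨i, rfl⟩ := mem_YO he
      obtain ⟨j, rfl⟩ := mem_YO hf
      have hi := i.isLt; have hj := j.isLt
      dsimp only at hc ⊢
      rw [yIdx_yE, yIdx_yE] at hc
      constructor
      · intro _
        by_cases ha : (i : ℕ) = 2 * t + 2 <;> by_cases hb : (j : ℕ) = 2 * t + 2
        · rw [yE_eq_of_val (i := i) (j := j) (by omega)]; exact OGraph.cross_self_false _
        · rw [if_pos ha, if_neg hb] at hc; exact absurd hc (by omega)
        · rw [if_neg ha, if_pos hb] at hc; exact absurd hc (by omega)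
        · rw [if_neg ha, if_neg hb] at hc
          exact yE_not_cross (by omega) (by omega) (by omega) (by omega)
      · intro habs
        rw [yIdx_yE] at habs
        exact absurd habs (by split <;> omega)
  small := by
    intro s' hs'
    interval_cases s'
    · -- 0 stacks, 2 queues
      refine ⟨fun e => if yIdx t e = 2 * t + 2 then 1 else 0,
        fun e he => by dsimp only; split <;> omega, fun e he f hf hc => ?_⟩
      obtain ⟨i, rfl⟩ := mem_YO he
      obtain ⟨j, rfl⟩ := mem_YO hf
      dsimp only at hc ⊢
      rw [yIdx_yE, yIdx_yE] at hc
      refine ⟨fun h0 => (Nat.not_lt_zero _ h0).elim, fun _ => ?_⟩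
      by_cases ha : (i : ℕ) = 2 * t + 2 <;> by_cases hb : (j : ℕ) = 2 * t + 2
      · rw [yE_eq_of_val (i := i) (j := j) (by omega)]; exact OGraph.nest_self_false _
      · rw [if_pos ha, if_neg hb] at hc; exact absurd hc (by omega)
      · rw [if_neg ha, if_pos hb] at hc; exact absurd hc (by omega)
      · exact yE_not_nest_of_ne_last ha hb
    · -- 1 stack, 1 queue
      refine ⟨fun e => if yIdx t e = 2 * t + 2 then 0 else 1,
        fun e he => by dsimp only; split <;> omega, fun e he f hf hc => ?_⟩
      obtain ⟨i, rfl⟩ := mem_YO he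
      obtain ⟨j, rfl⟩ := mem_YO hf
      dsimp only at hc ⊢
      rw [yIdx_yE, yIdx_yE] at hc
      constructor
      · intro h1
        rw [yIdx_yE] at h1
        by_cases ha : (i : ℕ) = 2 * t + 2 <;> by_cases hb : (j : ℕ) = 2 * t + 2
        · rw [yE_eq_of_val (i := i) (j := j) (by omega)]; exact OGraph.cross_self_false _
        · rw [if_pos ha, if_neg hb] at hc; exact absurd hc (by omega)
        · rw [if_neg ha, if_pos hb] at hc; exact absurd hc (by omega)
        · rw [if_neg ha] at h1; exact absurd h1 (by omega)
      · intro h1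
        by_cases ha : (i : ℕ) = 2 * t + 2 <;> by_cases hb : (j : ℕ) = 2 * t + 2
        · rw [yE_eq_of_val (i := i) (j := j) (by omega)]; exact OGraph.nest_self_false _
        · rw [if_pos ha, if_neg hb] at hc; exact absurd hc (by omega)
        · rw [if_neg ha, if_pos hb] at hc; exact absurd hc (by omega)
        · exact yE_not_nest_of_ne_last ha hb
  one_queue := by
    refine ⟨fun e => if yIdx t e = 0 then 2 else if yIdx t e = 2 * t + 2 then 0 else yIdx t e % 2,
      fun e he => by dsimp only; split_ifs <;> omega, fun e he f hf hc => ?_⟩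
    obtain ⟨i, rfl⟩ := mem_YO he
    obtain ⟨j, rfl⟩ := mem_YO hf
    have hi := i.isLt; have hj := j.isLt
    dsimp only at hc ⊢
    rw [yIdx_yE, yIdx_yE] at hc
    constructor
    · intro h2'
      rw [yIdx_yE] at h2'
      refine yE_not_cross ?_ ?_ ?_ ?_ <;> (split_ifs at hc h2' <;> omega)
    · intro h2'
      rw [yIdx_yE] at h2'
      have hij : (i : ℕ) = 0 ∧ (j : ℕ) = 0 := by split_ifs at hc h2' <;> omega
      rw [yE_eq_of_val (i := i) (j := j) (by omega)]
      exact OGraph.nest_self_false _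
  del := by
    intro e he
    obtain ⟨i0, rfl⟩ := mem_YO he
    have hi0 := i0.isLt
    refine ⟨fun e => ((yIdx t e + (2 * t + 2 - (i0 : ℕ))) % (2 * t + 3)) % 2,
      fun f hf => by dsimp only; omega, fun f hf f' hf' hc => ?_⟩
    obtain ⟨hne, hmem⟩ := Finset.mem_erase.1 hf
    obtain ⟨hne', hmem'⟩ := Finset.mem_erase.1 hf'
    obtain ⟨i, rfl⟩ := mem_YO hmem
    obtain ⟨j, rfl⟩ := mem_YO hmem'
    have hi := i.isLt; have hj := j.isLt
    have hii0 : (i : ℕ) ≠ (i0 : ℕ) := fun h => hne (yE_eq_of_val h)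
    have hji0 : (j : ℕ) ≠ (i0 : ℕ) := fun h => hne' (yE_eq_of_val h)
    dsimp only at hc
    rw [yIdx_yE, yIdx_yE] at hc
    refine ⟨fun _ => ?_, fun habs => absurd habs (by dsimp only; omega)⟩
    intro hcr
    rcases yE_cross_cases hcr with h | h | ⟨h1, h2⟩ | ⟨h1, h2⟩ <;>
      rcases mod_two_cases (show (i : ℕ) + (2 * t + 2 - (i0 : ℕ)) < 2 * (2 * t + 3) by omega) with
        ⟨e1, l1⟩ | ⟨e1, l1⟩ <;>
      rcases mod_two_cases (show (j : ℕ) + (2 * t + 2 - (i0 : ℕ)) < 2 * (2 * t + 3) by omega) with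
        ⟨e2, l2⟩ | ⟨e2, l2⟩ <;>
      omega

end Ycore
section Ring

variable {C : OGraph}

/-- One ring of `w` pairwise-crossing edges wrapped around `C`. -/
def ring (w : ℕ) (C : OGraph) : OGraph where
  n := w + C.n + w
  E := ((Finset.univ : Finset (Fin w)).image fun i : Fin w =>
      ((⟨(i : ℕ), by have := i.isLt; omega⟩ : Fin (w + C.n + w)),
       (⟨w + C.n + (i : ℕ), by have := i.isLt; omega⟩ : Fin (w + C.n + w)))) ∪
    (C.E.image fun e =>
      ((⟨w + (e.1 : ℕ), by have := e.1.isLt; omega⟩ : Fin (w + C.n + w)),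
       (⟨w + (e.2 : ℕ), by have := e.2.isLt; omega⟩ : Fin (w + C.n + w))))
  lt_of_mem := by
    intro e he
    rcases Finset.mem_union.1 he with h | h <;> simp only [Finset.mem_image] at h
    · obtain ⟨i, -, rfl⟩ := h
      simp only [Fin.mk_lt_mk]
      have := i.isLt; omega
    · obtain ⟨f, hf, rfl⟩ := h
      simp only [Fin.mk_lt_mk]
      have := C.lt_of_mem f hf
      rw [Fin.lt_def] at this
      omega

/-- Ring edge. -/
def rE (w : ℕ) (C : OGraph) (i : Fin w) : Fin (w + C.n + w) × Fin (w + C.n + w) :=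
  ((⟨(i : ℕ), by have := i.isLt; omega⟩ : Fin (w + C.n + w)),
   (⟨w + C.n + (i : ℕ), by have := i.isLt; omega⟩ : Fin (w + C.n + w)))

/-- Shifted core edge. -/
def shE (w : ℕ) (C : OGraph) (e : Fin C.n × Fin C.n) :
    Fin (w + C.n + w) × Fin (w + C.n + w) :=
  ((⟨w + (e.1 : ℕ), by have := e.1.isLt; omega⟩ : Fin (w + C.n + w)),
   (⟨w + (e.2 : ℕ), by have := e.2.isLt; omega⟩ : Fin (w + C.n + w)))

lemma rE_mem {w : ℕ} (i : Fin w) : rE w C i ∈ (ring w C).E := by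
  refine Finset.mem_union_left _ (Finset.mem_image.2 ⟨i, Finset.mem_univ i, rfl⟩)

lemma shE_mem {w : ℕ} {e : Fin C.n × Fin C.n} (he : e ∈ C.E) :
    shE w C e ∈ (ring w C).E := by
  refine Finset.mem_union_right _ (Finset.mem_image.2 ⟨e, he, rfl⟩)

lemma mem_ring {w : ℕ} {f : Fin (w + C.n + w) × Fin (w + C.n + w)}
    (hf : f ∈ (ring w C).E) :
    (∃ i : Fin w, f = rE w C i) ∨ (∃ e ∈ C.E, f = shE w C e) := by
  rcases Finset.mem_union.1 hf with h | h <;> simp only [Finset.mem_image] at h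
  · obtain ⟨i, -, rfl⟩ := h
    exact Or.inl ⟨i, rfl⟩
  · obtain ⟨e, he, rfl⟩ := h
    exact Or.inr ⟨e, he, rfl⟩

lemma rE_cross {w : ℕ} {i j : Fin w} (h : (i : ℕ) ≠ (j : ℕ)) :
    Cross (rE w C i) (rE w C j) := by
  have hi := i.isLt; have hj := j.isLt
  simp only [Cross, rE, Fin.mk_lt_mk]
  omega

lemma rE_eq_of_val {w : ℕ} {i j : Fin w} (h : (i : ℕ) = (j : ℕ)) :
    rE w C i = rE w C j := by
  have : i = j := Fin.ext h
  rw [this]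

lemma rE_shE_nest {w : ℕ} (i : Fin w) (e : Fin C.n × Fin C.n) :
    Nest (rE w C i) (shE w C e) := by
  have hi := i.isLt
  have h1 := e.1.isLt; have h2 := e.2.isLt
  simp only [Nest, rE, shE, Fin.mk_lt_mk]
  omega

lemma shE_cross_iff {w : ℕ} {e f : Fin C.n × Fin C.n} :
    Cross (shE w C e) (shE w C f) ↔ Cross e f := by
  simp only [Cross, shE, Fin.mk_lt_mk, Fin.lt_def]
  omega

lemma shE_nest_iff {w : ℕ} {e f : Fin C.n × Fin C.n} :
    Nest (shE w C e) (shE w C f) ↔ Nest e f := by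
  simp only [Nest, shE, Fin.mk_lt_mk, Fin.lt_def]
  omega

lemma shE_inj {w : ℕ} {e f : Fin C.n × Fin C.n} (h : shE w C e = shE w C f) : e = f := by
  simp only [shE, Prod.mk.injEq, Fin.mk.injEq] at h
  refine Prod.ext (Fin.ext ?_) (Fin.ext ?_) <;> omega

/-- A coloring of the ring graph from a ring-part coloring and a core coloring. -/
def ringColor (w : ℕ) (C : OGraph) (cr : ℕ → ℕ) (cc : Fin C.n × Fin C.n → ℕ) :
    Fin (ring w C).n × Fin (ring w C).n → ℕ :=
  fun p => if h : w ≤ (p.1 : ℕ) ∧ (p.1 : ℕ) < w + C.n ∧ w ≤ (p.2 : ℕ) ∧ (p.2 : ℕ) < w + C.n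
    then cc (⟨(p.1 : ℕ) - w, by omega⟩, ⟨(p.2 : ℕ) - w, by omega⟩)
    else cr (p.1 : ℕ)

lemma ringColor_rE {w : ℕ} {cr : ℕ → ℕ} {cc} (i : Fin w) :
    ringColor w C cr cc (rE w C i) = cr (i : ℕ) := by
  have := i.isLt
  unfold ringColor rE
  rw [dif_neg (by simp only [Fin.val_mk]; omega)]

lemma ringColor_shE {w : ℕ} {cr : ℕ → ℕ} {cc} (e : Fin C.n × Fin C.n) :
    ringColor w C cr cc (shE w C e) = cc e := by
  have h1 := e.1.isLt; have h2 := e.2.isLt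
  unfold ringColor shE
  rw [dif_pos (by simp only [Fin.val_mk]; omega)]
  congr 1
  refine Prod.ext (Fin.ext ?_) (Fin.ext ?_) <;> simp only [Fin.val_mk] <;> omega

lemma ring_matching {w : ℕ} (hC : C.IsMatching) : (ring w C).IsMatching := by
  rw [OGraph.isMatching_iff] at hC ⊢
  intro v
  have hv : (v : ℕ) < w + C.n + w := v.isLt
  rcases Nat.lt_or_ge (v : ℕ) w with hz1 | hz
  · -- left ring zone
    refine ⟨rE w C ⟨(v : ℕ), hz1⟩, rE_mem _, Or.inl (Fin.ext rfl), ?_⟩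
    intro f hf hfv
    rcases mem_ring hf with ⟨j, rfl⟩ | ⟨e, he, rfl⟩
    · have hj := j.isLt
      rcases hfv with h | h <;> have hval := congrArg Fin.val h <;>
        simp only [rE, Fin.val_mk] at hval
      · refine rE_eq_of_val ?_
        simp only [Fin.val_mk]
        omega
      · exact absurd hval (by omega)
    · exfalso
      have h1 := e.1.isLt; have h2 := e.2.isLt
      rcases hfv with h | h <;> have := congrArg Fin.val h <;>
        simp only [shE, Fin.val_mk] at this <;> omega
  rcases Nat.lt_or_ge (v : ℕ) (w + C.n) with hz2 | hz3
  · -- core zone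
    obtain ⟨e₀, he₀, hte₀, hu₀⟩ := hC ⟨(v : ℕ) - w, by omega⟩
    refine ⟨shE w C e₀, shE_mem he₀, ?_, ?_⟩
    · rcases hte₀ with h | h <;> have := congrArg Fin.val h <;>
        simp only [Fin.val_mk] at this
      · exact Or.inl (Fin.ext (by simp only [shE, Fin.val_mk]; omega))
      · exact Or.inr (Fin.ext (by simp only [shE, Fin.val_mk]; omega))
    · intro f hf hfv
      rcases mem_ring hf with ⟨j, rfl⟩ | ⟨e, he, rfl⟩
      · exfalso
        have hj := j.isLt
        rcases hfv with h | h <;> have := congrArg Fin.val h <;>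
          simp only [rE, Fin.val_mk] at this <;> omega
      · have h1 := e.1.isLt; have h2 := e.2.isLt
        have : e = e₀ := by
          refine hu₀ e he ?_
          rcases hfv with h | h <;> have := congrArg Fin.val h <;>
            simp only [shE, Fin.val_mk] at this
          · exact Or.inl (Fin.ext (by simp only [Fin.val_mk]; omega))
          · exact Or.inr (Fin.ext (by simp only [Fin.val_mk]; omega))
        rw [this]
  · -- right ring zone
    refine ⟨rE w C ⟨(v : ℕ) - (w + C.n), by omega⟩, rE_mem _, ?_, ?_⟩
    · exact Or.inr (Fin.ext (by simp only [rE, Fin.val_mk]; omega))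
    · intro f hf hfv
      rcases mem_ring hf with ⟨j, rfl⟩ | ⟨e, he, rfl⟩
      · have hj := j.isLt
        rcases hfv with h | h <;> have hval := congrArg Fin.val h <;>
          simp only [rE, Fin.val_mk] at hval
        · exact absurd hval (by omega)
        · refine rE_eq_of_val ?_
          simp only [Fin.val_mk]
          omega
      · exfalso
        have h1 := e.1.isLt; have h2 := e.2.isLt
        rcases hfv with h | h <;> have := congrArg Fin.val h <;>
          simp only [shE, Fin.val_mk] at this <;> omega

lemma layout_subset {n : ℕ} {E₁ E₂ : Finset (Fin n × Fin n)} {h₁ h₂} (hsub : E₂ ⊆ E₁)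
    {s q : ℕ} (h : (OGraph.mk n E₁ h₁).HasLayout s q) :
    (OGraph.mk n E₂ h₂).HasLayout s q := by
  obtain ⟨c, hlt, hcond⟩ := h
  exact ⟨c, fun e he => hlt e (hsub he), fun e he f hf hc => hcond e (hsub he) f (hsub hf) hc⟩

lemma ring_blocked {s g : ℕ} (hC : ¬ C.HasLayout s g) :
    ¬ (ring (s + 1) C).HasLayout s (g + 1) := by
  rintro ⟨c, hlt, hcond⟩
  -- some ring edge is on a queue
  have hex : ∃ i : Fin (s + 1), s ≤ c (rE (s + 1) C i) := by
    by_contra hno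
    push_neg at hno
    obtain ⟨i, j, hij, hcij⟩ := Fintype.exists_ne_map_eq_of_card_lt
      (fun i : Fin (s + 1) => (⟨c (rE (s + 1) C i), hno i⟩ : Fin s)) (by simp)
    have hceq : c (rE (s + 1) C i) = c (rE (s + 1) C j) := by
      simpa using congrArg Fin.val hcij
    exact (hcond _ (rE_mem i) _ (rE_mem j) hceq).1 (hno i)
      (rE_cross fun hv => hij (Fin.ext hv))
  obtain ⟨i₀, hi₀⟩ := hex
  have hb₀ : c (rE (s + 1) C i₀) < s + (g + 1) := hlt _ (rE_mem i₀)
  -- no core edge uses that queue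
  have hcore : ∀ e ∈ C.E, c (shE (s + 1) C e) ≠ c (rE (s + 1) C i₀) := by
    intro e he hceq
    exact (hcond _ (shE_mem he) _ (rE_mem i₀) (hceq.trans rfl)).2 (by omega)
      (OGraph.nest_comm (rE_shE_nest i₀ e))
  apply hC
  refine ⟨fun e => if c (shE (s + 1) C e) < c (rE (s + 1) C i₀) then c (shE (s + 1) C e)
    else c (shE (s + 1) C e) - 1, fun e he => ?_, fun e he f hf hc => ?_⟩
  · have := hlt _ (shE_mem he)
    have := hcore e he
    dsimp only
    split <;> omega
  · have h1 := hlt _ (shE_mem he)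
    have h2 := hlt _ (shE_mem hf)
    have h3 := hcore e he
    have h4 := hcore f hf
    dsimp only at hc
    have hceq : c (shE (s + 1) C e) = c (shE (s + 1) C f) := by
      split at hc <;> split at hc <;> omega
    have hcnd := hcond _ (shE_mem he) _ (shE_mem hf) hceq
    constructor
    · intro hlt'
      dsimp only at hlt'
      have : c (shE (s + 1) C e) < s := by split at hlt' <;> omega
      exact fun hcr => (hcnd.1 this) (shE_cross_iff.2 hcr)
    · intro hge
      dsimp only at hge
      have : s ≤ c (shE (s + 1) C e) := by split at hge <;> omega
      exact fun hns => (hcnd.2 this) (shE_nest_iff.2 hns)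

lemma ring_stacks {w : ℕ} (hC : C.HasLayout w 0) : (ring w C).HasLayout w 0 := by
  obtain ⟨cc, hlt, hcond⟩ := hC
  refine ⟨ringColor w C (fun x => x) cc, fun e he => ?_, fun e he f hf hc => ?_⟩
  · rcases mem_ring he with ⟨i, rfl⟩ | ⟨e', he', rfl⟩
    · rw [ringColor_rE]; have := i.isLt; omega
    · rw [ringColor_shE]; exact hlt _ he'
  · rcases mem_ring he with ⟨i, rfl⟩ | ⟨e', he', rfl⟩ <;>
      rcases mem_ring hf with ⟨j, rfl⟩ | ⟨f', hf', rfl⟩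
    · rw [ringColor_rE, ringColor_rE] at hc
      rw [rE_eq_of_val hc]
      exact ⟨fun _ => OGraph.cross_self_false _, fun _ => OGraph.nest_self_false _⟩
    · refine ⟨fun _ => OGraph.nest_not_cross (rE_shE_nest i f'), fun hge => ?_⟩
      rw [ringColor_rE] at hge
      have := i.isLt; exact absurd hge (by omega)
    · refine ⟨fun _ => OGraph.nest_not_cross (OGraph.nest_comm (rE_shE_nest j e')),
        fun hge => ?_⟩
      rw [ringColor_shE] at hge
      have := hlt _ he'; exact absurd hge (by omega)
    · rw [ringColor_shE, ringColor_shE] at hc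
      have hcnd := hcond _ he' _ hf' hc
      refine ⟨fun hlt' => ?_, fun hge => ?_⟩
      · rw [ringColor_shE] at hlt'
        exact fun hcr => (hcnd.1 hlt') (shE_cross_iff.1 hcr)
      · rw [ringColor_shE] at hge
        have := hlt _ he'; exact absurd hge (by omega)

lemma ring_queue {w s r : ℕ} (hC : C.HasLayout s r) : (ring w C).HasLayout s (r + 1) := by
  obtain ⟨cc, hlt, hcond⟩ := hC
  refine ⟨ringColor w C (fun _ => s + r) cc, fun e he => ?_, fun e he f hf hc => ?_⟩
  · rcases mem_ring he with ⟨i, rfl⟩ | ⟨e', he', rfl⟩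
    · rw [ringColor_rE]; omega
    · rw [ringColor_shE]; have := hlt _ he'; omega
  · rcases mem_ring he with ⟨i, rfl⟩ | ⟨e', he', rfl⟩ <;>
      rcases mem_ring hf with ⟨j, rfl⟩ | ⟨f', hf', rfl⟩
    · refine ⟨fun hlt' => ?_, fun _ => ?_⟩
      · rw [ringColor_rE] at hlt'; exact absurd hlt' (by omega)
      · by_cases hij : (i : ℕ) = (j : ℕ)
        · rw [rE_eq_of_val hij]; exact OGraph.nest_self_false _
        · exact OGraph.cross_not_nest (rE_cross hij)
    · rw [ringColor_rE, ringColor_shE] at hc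
      have := hlt _ hf'; exact absurd hc (by omega)
    · rw [ringColor_shE, ringColor_rE] at hc
      have := hlt _ he'; exact absurd hc (by omega)
    · rw [ringColor_shE, ringColor_shE] at hc
      have hcnd := hcond _ he' _ hf' hc
      refine ⟨fun hlt' => ?_, fun hge => ?_⟩
      · rw [ringColor_shE] at hlt'
        exact fun hcr => (hcnd.1 hlt') (shE_cross_iff.1 hcr)
      · rw [ringColor_shE] at hge
        exact fun hns => (hcnd.2 hge) (shE_nest_iff.1 hns)

lemma ring_erase_self {s r : ℕ} (hC : C.HasLayout s r) (i₀ : Fin (s + 1)) :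
    ((ring (s + 1) C).erase (rE (s + 1) C i₀)).HasLayout s r := by
  obtain ⟨cc, hlt, hcond⟩ := hC
  refine ⟨ringColor (s + 1) C (fun x => if x < (i₀ : ℕ) then x else x - 1) cc,
    fun e he => ?_, fun e he f hf hc => ?_⟩
  · obtain ⟨hne, hmem⟩ := Finset.mem_erase.1 he
    rcases mem_ring hmem with ⟨i, rfl⟩ | ⟨e', he', rfl⟩
    · have hii : (i : ℕ) ≠ (i₀ : ℕ) := fun h => hne (rE_eq_of_val h)
      have := i.isLt; have := i₀.isLt
      rw [ringColor_rE]
      split <;> omega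
    · rw [ringColor_shE]; have := hlt _ he'; omega
  · obtain ⟨hne, hmem⟩ := Finset.mem_erase.1 he
    obtain ⟨hne', hmem'⟩ := Finset.mem_erase.1 hf
    rcases mem_ring hmem with ⟨i, rfl⟩ | ⟨e', he', rfl⟩ <;>
      rcases mem_ring hmem' with ⟨j, rfl⟩ | ⟨f', hf', rfl⟩
    · have hii : (i : ℕ) ≠ (i₀ : ℕ) := fun h => hne (rE_eq_of_val h)
      have hjj : (j : ℕ) ≠ (i₀ : ℕ) := fun h => hne' (rE_eq_of_val h)
      rw [ringColor_rE, ringColor_rE] at hc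
      have hij : (i : ℕ) = (j : ℕ) := by split at hc <;> split at hc <;> omega
      rw [rE_eq_of_val hij]
      exact ⟨fun _ => OGraph.cross_self_false _, fun _ => OGraph.nest_self_false _⟩
    · have hii : (i : ℕ) ≠ (i₀ : ℕ) := fun h => hne (rE_eq_of_val h)
      refine ⟨fun _ => OGraph.nest_not_cross (rE_shE_nest i f'), fun hge => ?_⟩
      rw [ringColor_rE] at hge
      have := i.isLt; have := i₀.isLt
      exact absurd hge (by split <;> omega)
    · have hjj : (j : ℕ) ≠ (i₀ : ℕ) := fun h => hne' (rE_eq_of_val h)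
      refine ⟨fun _ => OGraph.nest_not_cross (OGraph.nest_comm (rE_shE_nest j e')), fun hge => ?_⟩
      rw [ringColor_shE] at hge
      rw [ringColor_shE, ringColor_rE] at hc
      have := j.isLt; have := i₀.isLt
      exact absurd (hc ▸ hge) (by split <;> omega)
    · rw [ringColor_shE, ringColor_shE] at hc
      have hcnd := hcond _ he' _ hf' hc
      refine ⟨fun hlt' => ?_, fun hge => ?_⟩
      · rw [ringColor_shE] at hlt'
        exact fun hcr => (hcnd.1 hlt') (shE_cross_iff.1 hcr)
      · rw [ringColor_shE] at hge
        exact fun hns => (hcnd.2 hge) (shE_nest_iff.1 hns)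

end Ring

section WrapN

/-- `g` nested rings of `w`-twists around core `C`. -/
def wrapN (w : ℕ) : ℕ → OGraph → OGraph
  | 0, C => C
  | g + 1, C => ring w (wrapN w g C)

lemma wrapN_matching {w g : ℕ} {C : OGraph} (hC : C.IsMatching) :
    (wrapN w g C).IsMatching := by
  induction g with
  | zero => exact hC
  | succ g ih => exact ring_matching ih

lemma wrapN_n_ge {w g : ℕ} {C : OGraph} : C.n ≤ (wrapN w g C).n := by
  induction g with
  | zero => exact le_rfl
  | succ g ih =>
    calc C.n ≤ (wrapN w g C).n := ih
    _ ≤ w + (wrapN w g C).n + w := by omega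
    _ = (wrapN w (g + 1) C).n := rfl

lemma wrapN_blocked {s g : ℕ} {C : OGraph} (hC : ¬ C.HasLayout s 0) :
    ¬ (wrapN (s + 1) g C).HasLayout s g := by
  induction g with
  | zero => exact hC
  | succ g ih => exact ring_blocked ih

lemma wrapN_stacks {w g : ℕ} {C : OGraph} (hC : C.HasLayout w 0) :
    (wrapN w g C).HasLayout w 0 := by
  induction g with
  | zero => exact hC
  | succ g ih => exact ring_stacks ih

lemma wrapN_queue {w g s r : ℕ} {C : OGraph} (hC : C.HasLayout s r) :
    (wrapN w g C).HasLayout s (r + g) := by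
  induction g with
  | zero => exact hC
  | succ g ih => exact (show ((ring w (wrapN w g C)).HasLayout s ((r + g) + 1)) from
      ring_queue ih).mono le_rfl (by omega)

lemma wrapN_del {s r g : ℕ} {C : OGraph}
    (hdel : ∀ e ∈ C.E, (C.erase e).HasLayout s r)
    (hoq : C.HasLayout s (r + 1)) :
    ∀ e ∈ (wrapN (s + 1) g C).E, ((wrapN (s + 1) g C).erase e).HasLayout s (r + g) := by
  induction g with
  | zero => exact fun e he => hdel e he
  | succ g ih =>
    intro e he
    rcases mem_ring he with ⟨i₀, rfl⟩ | ⟨e', he', rfl⟩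
    · -- erased a ring edge of the outermost ring
      have hD : (wrapN (s + 1) g C).HasLayout s (r + 1 + g) := wrapN_queue hoq
      have := ring_erase_self hD i₀
      exact this.mono le_rfl (by omega)
    · -- erased deeper: transport through the ring
      have hIH := ih e' he'
      have hq : (ring (s + 1) ((wrapN (s + 1) g C).erase e')).HasLayout s ((r + g) + 1) :=
        ring_queue hIH
      refine layout_subset ?_ (hq.mono le_rfl (by omega))
      intro f hf
      obtain ⟨hne, hmem⟩ := Finset.mem_erase.1 hf
      rcases mem_ring hmem with ⟨j, rfl⟩ | ⟨x, hx, rfl⟩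
      · exact Finset.mem_union_left _ (Finset.mem_image.2 ⟨j, Finset.mem_univ j, rfl⟩)
      · refine Finset.mem_union_right _ (Finset.mem_image.2 ⟨x, ?_, rfl⟩)
        refine Finset.mem_erase.2 ⟨fun hxe => hne ?_, hx⟩
        rw [hxe]
      
end WrapN
section Gadget

lemma twistO_matching (m : ℕ) : (twistO m).IsMatching := by
  rw [OGraph.isMatching_iff]
  intro v
  have hv : (v : ℕ) < m + m := v.isLt
  rcases Nat.lt_or_ge (v : ℕ) m with h1 | h1
  · refine ⟨twE m ⟨(v : ℕ), h1⟩, twE_mem _, Or.inl (Fin.ext rfl), ?_⟩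
    intro f hf hfv
    obtain ⟨j, rfl⟩ := mem_twistO hf
    have hj := j.isLt
    rcases hfv with h | h <;> have hval := congrArg Fin.val h <;>
      simp only [twE, Fin.val_mk] at hval
    · have : j = (⟨(v : ℕ), h1⟩ : Fin m) := Fin.ext (by simp only [Fin.val_mk]; omega)
      rw [this]
    · exact absurd hval (by omega)
  · refine ⟨twE m ⟨(v : ℕ) - m, by omega⟩, twE_mem _,
      Or.inr (Fin.ext (by simp only [twE, Fin.val_mk]; omega)), ?_⟩
    intro f hf hfv
    obtain ⟨j, rfl⟩ := mem_twistO hf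
    have hj := j.isLt
    rcases hfv with h | h <;> have hval := congrArg Fin.val h <;>
      simp only [twE, Fin.val_mk] at hval
    · exact absurd hval (by omega)
    · have : j = (⟨(v : ℕ) - m, by omega⟩ : Fin m) := Fin.ext (by simp only [Fin.val_mk]; omega)
      rw [this]

/-- The core for the `s`-th gadget. -/
def coreG (s t : ℕ) : OGraph := if s = 2 then YO t else twistO (s + 1)

lemma coreG_facts (s t : ℕ) : CoreFacts (coreG s t) s := by
  unfold coreG
  split
  · rename_i h; subst h; exact Y_coreFacts t
  · exact twist_coreFacts s

lemma coreG_matching (s t : ℕ) : (coreG s t).IsMatching := by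
  unfold coreG
  split
  · exact YO_matching t
  · exact twistO_matching (s + 1)

/-- The gadget blocking exactly the split `(s, k-s)`. -/
def gadget (k s t : ℕ) : OGraph := wrapN (s + 1) (k - s) (coreG s t)

lemma gadget_matching (k s t : ℕ) : (gadget k s t).IsMatching :=
  wrapN_matching (coreG_matching s t)

lemma gadget_blocked (k s t : ℕ) : ¬ (gadget k s t).HasLayout s (k - s) :=
  wrapN_blocked (coreG_facts s t).blocked

lemma gadget_cover {k s t s₀ : ℕ} (hsk : s ≤ k) (hs₀ : s₀ ≤ k) (hne : s₀ ≠ s) :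
    (gadget k s t).HasLayout s₀ (k - s₀) := by
  rcases Nat.lt_or_ge s s₀ with h | h
  · exact (wrapN_stacks (coreG_facts s t).allstk).mono (by omega) (by omega)
  · have hlt : s₀ < s := by omega
    have := wrapN_queue (w := s + 1) (g := k - s) ((coreG_facts s t).small s₀ hlt)
    exact this.mono le_rfl (by omega)

lemma gadget_del {k s t : ℕ} (e : Fin (gadget k s t).n × Fin (gadget k s t).n)
    (he : e ∈ (gadget k s t).E) : ((gadget k s t).erase e).HasLayout s (k - s) := by
  have h1 : (coreG s t).HasLayout s (0 + 1) := by
    have := (coreG_facts s t).one_queue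
    exact this.mono le_rfl (by omega)
  have := wrapN_del (r := 0) (g := k - s) (coreG_facts s t).del h1 e he
  exact this.mono le_rfl (by omega)

lemma gadget2_n (k t : ℕ) : 4 * t + 6 ≤ (gadget k 2 t).n := by
  have h1 : (coreG 2 t).n ≤ (gadget k 2 t).n := wrapN_n_ge
  have h2 : (coreG 2 t).n = 4 * t + 6 := rfl
  omega

end Gadget

section Append

variable {A B : OGraph}

/-- Side-by-side disjoint union. -/
def append (A B : OGraph) : OGraph where
  n := A.n + B.n
  E := (A.E.image fun e =>
      ((⟨(e.1 : ℕ), by have := e.1.isLt; omega⟩ : Fin (A.n + B.n)),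
       (⟨(e.2 : ℕ), by have := e.2.isLt; omega⟩ : Fin (A.n + B.n)))) ∪
    (B.E.image fun e =>
      ((⟨A.n + (e.1 : ℕ), by have := e.1.isLt; omega⟩ : Fin (A.n + B.n)),
       (⟨A.n + (e.2 : ℕ), by have := e.2.isLt; omega⟩ : Fin (A.n + B.n))))
  lt_of_mem := by
    intro e he
    rcases Finset.mem_union.1 he with h | h <;> simp only [Finset.mem_image] at h
    · obtain ⟨f, hf, rfl⟩ := h
      have := (Fin.lt_def).1 (A.lt_of_mem f hf)
      simp only [Fin.mk_lt_mk]
      omega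
    · obtain ⟨f, hf, rfl⟩ := h
      have := (Fin.lt_def).1 (B.lt_of_mem f hf)
      simp only [Fin.mk_lt_mk]
      omega

def apL (A B : OGraph) (e : Fin A.n × Fin A.n) : Fin (A.n + B.n) × Fin (A.n + B.n) :=
  ((⟨(e.1 : ℕ), by have := e.1.isLt; omega⟩ : Fin (A.n + B.n)),
   (⟨(e.2 : ℕ), by have := e.2.isLt; omega⟩ : Fin (A.n + B.n)))

def apR (A B : OGraph) (e : Fin B.n × Fin B.n) : Fin (A.n + B.n) × Fin (A.n + B.n) :=
  ((⟨A.n + (e.1 : ℕ), by have := e.1.isLt; omega⟩ : Fin (A.n + B.n)),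
   (⟨A.n + (e.2 : ℕ), by have := e.2.isLt; omega⟩ : Fin (A.n + B.n)))

end Append
section Append2

variable {A B : OGraph}

lemma apL_mem {e : Fin A.n × Fin A.n} (he : e ∈ A.E) : apL A B e ∈ (append A B).E :=
  Finset.mem_union_left _ (Finset.mem_image.2 ⟨e, he, rfl⟩)

lemma apR_mem {e : Fin B.n × Fin B.n} (he : e ∈ B.E) : apR A B e ∈ (append A B).E :=
  Finset.mem_union_right _ (Finset.mem_image.2 ⟨e, he, rfl⟩)

lemma mem_append {f : Fin (A.n + B.n) × Fin (A.n + B.n)} (hf : f ∈ (append A B).E) :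
    (∃ e ∈ A.E, f = apL A B e) ∨ (∃ e ∈ B.E, f = apR A B e) := by
  rcases Finset.mem_union.1 hf with h | h <;> simp only [Finset.mem_image] at h
  · obtain ⟨e, he, rfl⟩ := h
    exact Or.inl ⟨e, he, rfl⟩
  · obtain ⟨e, he, rfl⟩ := h
    exact Or.inr ⟨e, he, rfl⟩

lemma apL_cross_iff {e f : Fin A.n × Fin A.n} :
    Cross (apL A B e) (apL A B f) ↔ Cross e f := by
  simp only [Cross, apL, Fin.mk_lt_mk, Fin.lt_def]

lemma apL_nest_iff {e f : Fin A.n × Fin A.n} :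
    Nest (apL A B e) (apL A B f) ↔ Nest e f := by
  simp only [Nest, apL, Fin.mk_lt_mk, Fin.lt_def]

lemma apR_cross_iff {e f : Fin B.n × Fin B.n} :
    Cross (apR A B e) (apR A B f) ↔ Cross e f := by
  simp only [Cross, apR, Fin.mk_lt_mk, Fin.lt_def]
  omega

lemma apR_nest_iff {e f : Fin B.n × Fin B.n} :
    Nest (apR A B e) (apR A B f) ↔ Nest e f := by
  simp only [Nest, apR, Fin.mk_lt_mk, Fin.lt_def]
  omega

lemma apLR_not_cross {e : Fin A.n × Fin A.n} {f : Fin B.n × Fin B.n} :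
    ¬ Cross (apL A B e) (apR A B f) := by
  simp only [Cross, apL, apR, Fin.mk_lt_mk]
  have := e.1.isLt; have := e.2.isLt
  omega

lemma apLR_not_nest {e : Fin A.n × Fin A.n} {f : Fin B.n × Fin B.n} :
    ¬ Nest (apL A B e) (apR A B f) := by
  simp only [Nest, apL, apR, Fin.mk_lt_mk]
  have := e.1.isLt; have := e.2.isLt
  omega

lemma apRL_not_cross {e : Fin B.n × Fin B.n} {f : Fin A.n × Fin A.n} :
    ¬ Cross (apR A B e) (apL A B f) := by
  simp only [Cross, apL, apR, Fin.mk_lt_mk]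
  have := f.1.isLt; have := f.2.isLt
  omega

lemma apRL_not_nest {e : Fin B.n × Fin B.n} {f : Fin A.n × Fin A.n} :
    ¬ Nest (apR A B e) (apL A B f) := by
  simp only [Nest, apL, apR, Fin.mk_lt_mk]
  have := f.1.isLt; have := f.2.isLt
  omega

lemma append_matching (hA : A.IsMatching) (hB : B.IsMatching) :
    (append A B).IsMatching := by
  rw [OGraph.isMatching_iff] at hA hB ⊢
  intro v
  have hv : (v : ℕ) < A.n + B.n := v.isLt
  rcases Nat.lt_or_ge (v : ℕ) A.n with h1 | h1
  · obtain ⟨e₀, he₀, ht₀, hu₀⟩ := hA ⟨(v : ℕ), h1⟩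
    refine ⟨apL A B e₀, apL_mem he₀, ?_, ?_⟩
    · rcases ht₀ with h | h <;> have hval := congrArg Fin.val h <;>
        simp only [Fin.val_mk] at hval
      · exact Or.inl (Fin.ext (by simp only [apL, Fin.val_mk]; omega))
      · exact Or.inr (Fin.ext (by simp only [apL, Fin.val_mk]; omega))
    · intro f hf hfv
      rcases mem_append hf with ⟨e, he, rfl⟩ | ⟨e, he, rfl⟩
      · have : e = e₀ := by
          refine hu₀ e he ?_
          rcases hfv with h | h <;> have hval := congrArg Fin.val h <;>
            simp only [apL, Fin.val_mk] at hval
          · exact Or.inl (Fin.ext (by simp only [Fin.val_mk]; omega))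
          · exact Or.inr (Fin.ext (by simp only [Fin.val_mk]; omega))
        rw [this]
      · exfalso
        have := e.1.isLt; have := e.2.isLt
        rcases hfv with h | h <;> have hval := congrArg Fin.val h <;>
          simp only [apR, Fin.val_mk] at hval <;> omega
  · obtain ⟨e₀, he₀, ht₀, hu₀⟩ := hB ⟨(v : ℕ) - A.n, by omega⟩
    refine ⟨apR A B e₀, apR_mem he₀, ?_, ?_⟩
    · rcases ht₀ with h | h <;> have hval := congrArg Fin.val h <;>
        simp only [Fin.val_mk] at hval
      · exact Or.inl (Fin.ext (by simp only [apR, Fin.val_mk]; omega))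
      · exact Or.inr (Fin.ext (by simp only [apR, Fin.val_mk]; omega))
    · intro f hf hfv
      rcases mem_append hf with ⟨e, he, rfl⟩ | ⟨e, he, rfl⟩
      · exfalso
        have := e.1.isLt; have := e.2.isLt
        rcases hfv with h | h <;> have hval := congrArg Fin.val h <;>
          simp only [apL, Fin.val_mk] at hval <;> omega
      · have : e = e₀ := by
          refine hu₀ e he ?_
          rcases hfv with h | h <;> have hval := congrArg Fin.val h <;>
            simp only [apR, Fin.val_mk] at hval
          · exact Or.inl (Fin.ext (by simp only [Fin.val_mk]; omega))
          · exact Or.inr (Fin.ext (by simp only [Fin.val_mk]; omega))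
        rw [this]

/-- Combined coloring for an append. -/
def apColor (A B : OGraph) (cA : Fin A.n × Fin A.n → ℕ) (cB : Fin B.n × Fin B.n → ℕ) :
    Fin (A.n + B.n) × Fin (A.n + B.n) → ℕ :=
  fun p => if h : (p.1 : ℕ) < A.n ∧ (p.2 : ℕ) < A.n
    then cA (⟨(p.1 : ℕ), h.1⟩, ⟨(p.2 : ℕ), h.2⟩)
    else if h2 : A.n ≤ (p.1 : ℕ) ∧ A.n ≤ (p.2 : ℕ)
      then cB (⟨(p.1 : ℕ) - A.n, by have := p.1.isLt; omega⟩,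
               ⟨(p.2 : ℕ) - A.n, by have := p.2.isLt; omega⟩)
      else 0

lemma apColor_apL {cA cB} (e : Fin A.n × Fin A.n) :
    apColor A B cA cB (apL A B e) = cA e := by
  have h1 := e.1.isLt; have h2 := e.2.isLt
  unfold apColor apL
  rw [dif_pos (by simp only [Fin.val_mk]; omega)]

lemma apColor_apR {cA cB} (e : Fin B.n × Fin B.n) :
    apColor A B cA cB (apR A B e) = cB e := by
  have h1 := e.1.isLt; have h2 := e.2.isLt
  unfold apColor apR
  rw [dif_neg (by simp only [Fin.val_mk]; omega),
    dif_pos (by simp only [Fin.val_mk]; omega)]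
  congr 1
  refine Prod.ext (Fin.ext ?_) (Fin.ext ?_) <;> simp only [Fin.val_mk] <;> omega

lemma append_layout {s q : ℕ} (hA : A.HasLayout s q) (hB : B.HasLayout s q) :
    (append A B).HasLayout s q := by
  obtain ⟨cA, hltA, hcondA⟩ := hA
  obtain ⟨cB, hltB, hcondB⟩ := hB
  refine ⟨apColor A B cA cB, fun e he => ?_, fun e he f hf hc => ?_⟩
  · rcases mem_append he with ⟨e', he', rfl⟩ | ⟨e', he', rfl⟩
    · rw [apColor_apL]; exact hltA _ he'
    · rw [apColor_apR]; exact hltB _ he'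
  · rcases mem_append he with ⟨e', he', rfl⟩ | ⟨e', he', rfl⟩ <;>
      rcases mem_append hf with ⟨f', hf', rfl⟩ | ⟨f', hf', rfl⟩
    · rw [apColor_apL, apColor_apL] at hc
      have hcnd := hcondA _ he' _ hf' hc
      refine ⟨fun hlt' => ?_, fun hge => ?_⟩
      · rw [apColor_apL] at hlt'
        exact fun hcr => (hcnd.1 hlt') (apL_cross_iff.1 hcr)
      · rw [apColor_apL] at hge
        exact fun hns => (hcnd.2 hge) (apL_nest_iff.1 hns)
    · exact ⟨fun _ => apLR_not_cross, fun _ => apLR_not_nest⟩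
    · exact ⟨fun _ => apRL_not_cross, fun _ => apRL_not_nest⟩
    · rw [apColor_apR, apColor_apR] at hc
      have hcnd := hcondB _ he' _ hf' hc
      refine ⟨fun hlt' => ?_, fun hge => ?_⟩
      · rw [apColor_apR] at hlt'
        exact fun hcr => (hcnd.1 hlt') (apR_cross_iff.1 hcr)
      · rw [apColor_apR] at hge
        exact fun hns => (hcnd.2 hge) (apR_nest_iff.1 hns)

lemma append_blocked_left {s q : ℕ} (hA : ¬ A.HasLayout s q) :
    ¬ (append A B).HasLayout s q := by
  rintro ⟨c, hlt, hcond⟩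
  apply hA
  refine ⟨fun e => c (apL A B e), fun e he => hlt _ (apL_mem he), fun e he f hf hc => ?_⟩
  have hcnd := hcond _ (apL_mem he) _ (apL_mem hf) hc
  exact ⟨fun hlt' => fun hcr => (hcnd.1 hlt') (apL_cross_iff.2 hcr),
    fun hge => fun hns => (hcnd.2 hge) (apL_nest_iff.2 hns)⟩

lemma append_blocked_right {s q : ℕ} (hB : ¬ B.HasLayout s q) :
    ¬ (append A B).HasLayout s q := by
  rintro ⟨c, hlt, hcond⟩
  apply hB
  refine ⟨fun e => c (apR A B e), fun e he => hlt _ (apR_mem he), fun e he f hf hc => ?_⟩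
  have hcnd := hcond _ (apR_mem he) _ (apR_mem hf) hc
  exact ⟨fun hlt' => fun hcr => (hcnd.1 hlt') (apR_cross_iff.2 hcr),
    fun hge => fun hns => (hcnd.2 hge) (apR_nest_iff.2 hns)⟩

lemma append_erase_left {s q : ℕ} {e : Fin A.n × Fin A.n} (he : e ∈ A.E)
    (hA : (A.erase e).HasLayout s q) (hB : B.HasLayout s q) :
    ((append A B).erase (apL A B e)).HasLayout s q := by
  refine layout_subset ?_ (append_layout (A := A.erase e) (B := B) hA hB)
  intro f hf
  obtain ⟨hne, hmem⟩ := Finset.mem_erase.1 hf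
  rcases mem_append hmem with ⟨x, hx, rfl⟩ | ⟨x, hx, rfl⟩
  · refine Finset.mem_union_left _ (Finset.mem_image.2 ⟨x, ?_, rfl⟩)
    refine Finset.mem_erase.2 ⟨fun hxe => hne ?_, hx⟩
    rw [hxe]
  · exact Finset.mem_union_right _ (Finset.mem_image.2 ⟨x, hx, rfl⟩)

lemma append_erase_right {s q : ℕ} {e : Fin B.n × Fin B.n} (he : e ∈ B.E)
    (hB : (B.erase e).HasLayout s q) (hA : A.HasLayout s q) :
    ((append A B).erase (apR A B e)).HasLayout s q := by
  refine layout_subset ?_ (append_layout (A := A) (B := B.erase e) hA hB)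
  intro f hf
  obtain ⟨hne, hmem⟩ := Finset.mem_erase.1 hf
  rcases mem_append hmem with ⟨x, hx, rfl⟩ | ⟨x, hx, rfl⟩
  · exact Finset.mem_union_left _ (Finset.mem_image.2 ⟨x, hx, rfl⟩)
  · refine Finset.mem_union_right _ (Finset.mem_image.2 ⟨x, ?_, rfl⟩)
    refine Finset.mem_erase.2 ⟨fun hxe => hne ?_, hx⟩
    rw [hxe]

end Append2
section Assembly

/-- The chain of gadgets for splits `0, 1, …, s`. -/
def GG (k t : ℕ) : ℕ → OGraph
  | 0 => gadget k 0 t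
  | s + 1 => append (gadget k (s + 1) t) (GG k t s)

lemma GG_matching (k t s : ℕ) : (GG k t s).IsMatching := by
  induction s with
  | zero => exact gadget_matching k 0 t
  | succ s ih => exact append_matching (gadget_matching k (s + 1) t) ih

lemma GG_blocked (k t : ℕ) : ∀ s, ∀ s' ≤ s, ¬ (GG k t s).HasLayout s' (k - s') := by
  intro s
  induction s with
  | zero =>
    intro s' hs'
    have : s' = 0 := by omega
    subst this
    exact gadget_blocked k 0 t
  | succ s ih =>
    intro s' hs'
    rcases Nat.lt_or_ge s' (s + 1) with h | h
    · exact append_blocked_right (ih s' (by omega))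
    · have : s' = s + 1 := by omega
      subst this
      exact append_blocked_left (gadget_blocked k (s + 1) t)

lemma GG_cover_gt (k t : ℕ) : ∀ s s₀, s < s₀ → s₀ ≤ k →
    (GG k t s).HasLayout s₀ (k - s₀) := by
  intro s
  induction s with
  | zero =>
    intro s₀ h1 h2
    exact gadget_cover (by omega) h2 (by omega)
  | succ s ih =>
    intro s₀ h1 h2
    exact append_layout (gadget_cover (by omega) h2 (by omega)) (ih s₀ (by omega) h2)

lemma GG_erase (k t : ℕ) : ∀ s, s ≤ k →
    ∀ e ∈ (GG k t s).E, ∃ s₁, s₁ ≤ s ∧ ((GG k t s).erase e).HasLayout s₁ (k - s₁) := by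
  intro s
  induction s with
  | zero =>
    intro hs e he
    exact ⟨0, le_rfl, gadget_del e he⟩
  | succ s ih =>
    intro hs e he
    rcases mem_append he with ⟨x, hx, rfl⟩ | ⟨x, hx, rfl⟩
    · refine ⟨s + 1, le_rfl, ?_⟩
      exact append_erase_left hx (gadget_del x hx) (GG_cover_gt k t s (s + 1) (by omega) hs)
    · obtain ⟨s₁, hs₁, hlay⟩ := ih (by omega) x hx
      refine ⟨s₁, by omega, ?_⟩
      exact append_erase_right hx hlay (gadget_cover (by omega) (by omega) (by omega))

lemma GG_n_ge (k t : ℕ) : ∀ s, 2 ≤ s → 4 * t + 6 ≤ (GG k t s).n := by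
  intro s
  induction s with
  | zero => omega
  | succ s ih =>
    intro hs
    rcases Nat.lt_or_ge s 2 with h | h
    · -- s + 1 = 2
      have hs2 : s + 1 = 2 := by omega
      have h1 : 4 * t + 6 ≤ (gadget k (s + 1) t).n := by
        rw [hs2]; exact gadget2_n k t
      have : (GG k t (s + 1)).n = (gadget k (s + 1) t).n + (GG k t s).n := rfl
      omega
    · have h1 := ih h
      have : (GG k t (s + 1)).n = (gadget k (s + 1) t).n + (GG k t s).n := rfl
      omega

lemma GG_critical (k t : ℕ) (hk : 2 ≤ k) : (GG k t k).IsKCritical k := by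
  constructor
  · refine OGraph.lt_mn fun s q hsq hlay => ?_
    have hs : s ≤ k := by omega
    have hq : k - s = q := by omega
    exact GG_blocked k t k s hs (hq ▸ hlay)
  · intro e he
    obtain ⟨s₁, hs₁, hlay⟩ := GG_erase k t k le_rfl e he
    have := OGraph.mn_le hlay
    omega

end Assembly
/-- For every `k ≥ 2` and every `n`, there is a `k`-critical
ordered matching with more than `n` vertices; in particular there are
infinitely many `k`-critical ordered matchings. -/
theorem infinitely_many_k_critical_matchings (k : ℕ) (hk : 2 ≤ k) :
    (∀ n : ℕ, ∃ G : OGraph, G.IsMatching ∧ n < G.n ∧ G.IsKCritical k) ∧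
    {G : OGraph | G.IsMatching ∧ G.IsKCritical k}.Infinite := by
  have main : ∀ n : ℕ, ∃ G : OGraph, G.IsMatching ∧ n < G.n ∧ G.IsKCritical k := by
    intro n
    refine ⟨GG k n k, GG_matching k n k, ?_, GG_critical k n hk⟩
    have := GG_n_ge k n k hk
    omega
  refine ⟨main, ?_⟩
  by_contra hfin
  rw [Set.not_infinite] at hfin
  obtain ⟨N, hN⟩ := (hfin.image OGraph.n).bddAbove
  obtain ⟨G, hGm, hGn, hGc⟩ := main N
  have hmem : G.n ∈ OGraph.n '' {G : OGraph | G.IsMatching ∧ G.IsKCritical k} :=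
    ⟨G, ⟨hGm, hGc⟩, rfl⟩
  have := hN hmem
  omega

end MixedLayouts
end

section
/- For every integer s ≥ 2 and every n ≥ 3, there exists an (s,0)-critical ordered matching with at least n vertices. -/
namespace MixedLayouts

/-! ### Construction -/

/-- first endpoint of chord `i`. -/
def eA (s nn i : ℕ) : ℕ :=
  if 2*i + (2*s-1) < 2*nn then 2*i else 2*i + (2*s-1) - 2*nn

/-- second endpoint of chord `i`. -/
def eB (s nn i : ℕ) : ℕ :=
  if 2*i + (2*s-1) < 2*nn then 2*i + (2*s-1) else 2*i

def edgeF (s nn : ℕ) (hs : 2 ≤ s) (hnn : 3*s ≤ nn) (i : Fin nn) :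
    Fin (2*nn) × Fin (2*nn) :=
  (⟨eA s nn i, by have := i.isLt; unfold eA; split_ifs <;> omega⟩,
   ⟨eB s nn i, by have := i.isLt; unfold eB; split_ifs <;> omega⟩)

def Gr (s nn : ℕ) (hs : 2 ≤ s) (hnn : 3*s ≤ nn) : OGraph where
  n := 2*nn
  E := Finset.image (edgeF s nn hs hnn) Finset.univ
  lt_of_mem := by
    intro e he
    obtain ⟨i, -, rfl⟩ := Finset.mem_image.mp he
    have := i.isLt
    show (⟨eA s nn i, _⟩ : Fin (2*nn)) < ⟨eB s nn i, _⟩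
    rw [Fin.mk_lt_mk]
    unfold eA eB; split_ifs <;> omega

lemma cross_iff_nat (s nn : ℕ) (hs : 2 ≤ s) (hnn : 3*s ≤ nn) (i j : ℕ)
    (hi : i < nn) (hj : j < nn) (hij : i < j) :
    ((eA s nn i < eA s nn j ∧ eA s nn j < eB s nn i ∧ eB s nn i < eB s nn j) ∨
     (eA s nn j < eA s nn i ∧ eA s nn i < eB s nn j ∧ eB s nn j < eB s nn i))
    ↔ (j - i < s ∨ nn - s < j - i) := by
  unfold eA eB; split_ifs <;> omega

lemma cross_iff (s nn : ℕ) (hs : 2 ≤ s) (hnn : 3*s ≤ nn) (i j : Fin nn)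
    (hij : (i : ℕ) < j) :
    Cross (edgeF s nn hs hnn i) (edgeF s nn hs hnn j)
      ↔ ((j:ℕ) - i < s ∨ nn - s < (j:ℕ) - i) := by
  have h := cross_iff_nat s nn hs hnn i j i.isLt j.isLt hij
  simpa [Cross, edgeF, Fin.mk_lt_mk] using h

lemma cross_symm {n : ℕ} (e f : Fin n × Fin n) : Cross e f ↔ Cross f e := by
  unfold Cross; tauto

lemma cross_irrefl {n : ℕ} (e : Fin n × Fin n) : ¬ Cross e e := by
  simp [Cross]

/-! ### counting: separated sets are small -/

lemma sep_bound (s : ℕ) (C : Finset ℕ)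
    (hsep : ∀ i ∈ C, ∀ j ∈ C, i < j → i + s ≤ j) :
    ∀ a b : ℕ, a ≤ b + s → (∀ i ∈ C, a ≤ i ∧ i ≤ b) → s * C.card + a ≤ b + s := by
  induction C using Finset.strongInduction with
  | _ C ih =>
    intro a b hab hmem
    rcases C.eq_empty_or_nonempty with rfl | hne
    · simpa using hab
    · set i₀ := C.min' hne with hi₀
      have hi₀mem : i₀ ∈ C := C.min'_mem hne
      have hsub : C.erase i₀ ⊂ C := Finset.erase_ssubset hi₀mem
      have hsep' : ∀ i ∈ C.erase i₀, ∀ j ∈ C.erase i₀, i < j → i + s ≤ j := by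
        intro i hi j hj hij
        exact hsep i (Finset.mem_of_mem_erase hi) j (Finset.mem_of_mem_erase hj) hij
      have hmem' : ∀ i ∈ C.erase i₀, i₀ + s ≤ i ∧ i ≤ b := by
        intro i hi
        have hiC := Finset.mem_of_mem_erase hi
        have h1 : i₀ < i := lt_of_le_of_ne (C.min'_le i hiC) (Ne.symm (Finset.ne_of_mem_erase hi))
        exact ⟨hsep i₀ hi₀mem i hiC h1, (hmem i hiC).2⟩
      have hib : i₀ ≤ b := (hmem i₀ hi₀mem).2
      have hIH := ih (C.erase i₀) hsub hsep' (i₀ + s) b (by omega)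
        (fun i hi => hmem' i hi)
      have hcard : s * C.card = s * (C.erase i₀).card + s := by
        rw [← Finset.card_erase_add_one hi₀mem, Nat.mul_succ]
      have ha : a ≤ i₀ := (hmem i₀ hi₀mem).1
      linarith

/-! ### the graph has no s-stack layout -/

lemma no_layout (s nn m : ℕ) (hs : 2 ≤ s) (hnn : 3*s ≤ nn) (hm : nn = m*s+1) :
    ¬ (Gr s nn hs hnn).HasLayout s 0 := by
  rintro ⟨c, hc1, hc2⟩
  set f := edgeF s nn hs hnn with hf
  have hmemE : ∀ i : Fin nn, f i ∈ (Gr s nn hs hnn).E := by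
    intro i; exact Finset.mem_image_of_mem _ (Finset.mem_univ i)
  have hce : ∀ i : Fin nn, c (f i) < s := by
    intro i; simpa using hc1 (f i) (hmemE i)
  -- cover
  have hcover : (Finset.univ : Finset (Fin nn)) =
      (Finset.range s).biUnion (fun t => Finset.univ.filter (fun i => c (f i) = t)) := by
    ext i
    simp only [Finset.mem_univ, Finset.mem_biUnion, Finset.mem_range, Finset.mem_filter,
      true_iff, true_and]
    exact ⟨c (f i), hce i, rfl⟩
  -- each class is small
  have hclass : ∀ t ∈ Finset.range s,
      (Finset.univ.filter (fun i => c (f i) = t)).card ≤ m := by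
    intro t ht
    rw [Finset.mem_range] at ht
    set D := Finset.univ.filter (fun i : Fin nn => c (f i) = t) with hD
    set C := D.image Fin.val with hC
    have hcardC : C.card = D.card := Finset.card_image_of_injective D Fin.val_injective
    have hsep : ∀ x ∈ C, ∀ y ∈ C, x < y → x + s ≤ y ∧ y ≤ x + (nn - s) := by
      intro x hx y hy hxy
      obtain ⟨i, hiD, rfl⟩ := Finset.mem_image.mp hx
      obtain ⟨j, hjD, rfl⟩ := Finset.mem_image.mp hy
      have hci : c (f i) = t := (Finset.mem_filter.mp hiD).2
      have hcj : c (f j) = t := (Finset.mem_filter.mp hjD).2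
      have hcc : c (f i) = c (f j) := by rw [hci, hcj]
      have hnc := (hc2 (f i) (hmemE i) (f j) (hmemE j) hcc).1 (by rw [hci]; omega)
      have := (cross_iff s nn hs hnn i j hxy).not.mp hnc
      have hj := j.isLt
      omega
    rcases C.eq_empty_or_nonempty with hCe | hne
    · rw [← hcardC, hCe]; simp
    · set a₀ := C.min' hne with ha₀
      have ha₀mem : a₀ ∈ C := C.min'_mem hne
      have hbound := sep_bound s C
        (fun x hx y hy hxy => (hsep x hx y hy hxy).1) a₀ (a₀ + (nn - s)) (by omega)
        (by
          intro i hi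
          refine ⟨C.min'_le i hi, ?_⟩
          rcases eq_or_lt_of_le (C.min'_le i hi) with h | h
          · omega
          · exact (hsep a₀ ha₀mem i hi h).2)
      -- s * C.card ≤ nn
      have hsC : s * C.card ≤ nn := by omega
      by_contra hcon
      push_neg at hcon
      have h1 : s * (m + 1) ≤ s * C.card := by
        apply Nat.mul_le_mul_left
        omega
      have h2 : s * (m+1) = s*m + s := by ring
      have h3 : s*m = m*s := Nat.mul_comm s m
      linarith
  have htot : nn ≤ s * m := by
    have h1 : (Finset.univ : Finset (Fin nn)).card = nn := by simp
    have h2 := Finset.card_biUnion_le (s := Finset.range s)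
      (t := fun t => Finset.univ.filter (fun i => c (f i) = t))
    rw [← hcover, h1] at h2
    calc nn ≤ ∑ t ∈ Finset.range s, (Finset.univ.filter (fun i => c (f i) = t)).card := h2
      _ ≤ ∑ _t ∈ Finset.range s, m := Finset.sum_le_sum hclass
      _ = s * m := by rw [Finset.sum_const, Finset.card_range, smul_eq_mul]
  have h3 : s*m = m*s := Nat.mul_comm s m
  linarith


/-! ### deletion layouts -/

lemma rval (nn i₀ j : ℕ) (hi : i₀ < nn) (hj : j < nn) :
    (j + nn - (i₀+1)) % nn = if i₀ < j then j - i₀ - 1 else j + nn - i₀ - 1 := by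
  by_cases h : i₀ < j
  · have h2 : j + nn - (i₀+1) = (j - i₀ - 1) + nn := by omega
    rw [if_pos h, h2, Nat.add_mod_right, Nat.mod_eq_of_lt (by omega)]
  · rw [if_neg h]; exact Nat.mod_eq_of_lt (by omega)

lemma mod_ne (s x y : ℕ) (hxy : x < y) (hnd : ¬ s ∣ (y - x)) (h : x % s = y % s) : False :=
  hnd ((Nat.modEq_iff_dvd' hxy.le).mp h)

lemma not_dvd_lt (s d : ℕ) (h0 : 0 < d) (hds : d < s) : ¬ s ∣ d :=
  fun hdvd => absurd (Nat.le_of_dvd h0 hdvd) (by omega)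

lemma not_dvd_sub (s nn e : ℕ) (hs : 2 ≤ s) (hmod : nn % s = 1) (he : 2 ≤ e)
    (hes : e < s) (hen : e ≤ nn) : ¬ s ∣ (nn - e) := by
  rintro ⟨k, hk⟩
  have h2 : nn = s * k + e := by
    have := (Nat.sub_eq_iff_eq_add hen).mp hk
    omega
  rw [h2, Nat.mul_add_mod, Nat.mod_eq_of_lt hes] at hmod
  omega

lemma same_color_not_cross (s nn : ℕ) (hs : 2 ≤ s) (hnn : 3*s ≤ nn) (hmod : nn % s = 1)
    (i₀ j j' : ℕ) (hi₀ : i₀ < nn) (hj : j < nn) (hj' : j' < nn) (hlt : j < j')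
    (hji : j ≠ i₀) (hj'i : j' ≠ i₀)
    (hcol : ((j + nn - (i₀+1)) % nn) % s = ((j' + nn - (i₀+1)) % nn) % s) :
    ¬ (j' - j < s ∨ nn - s < j' - j) := by
  intro hcross
  rw [rval nn i₀ j hi₀ hj, rval nn i₀ j' hi₀ hj'] at hcol
  by_cases h1 : i₀ < j
  · rw [if_pos h1, if_pos (lt_trans h1 hlt)] at hcol
    rcases hcross with hc | hc
    · refine mod_ne s (j - i₀ - 1) (j' - i₀ - 1) (by omega) ?_ hcol
      have h3 : (j' - i₀ - 1) - (j - i₀ - 1) = j' - j := by omega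
      rw [h3]; exact not_dvd_lt s _ (by omega) hc
    · refine mod_ne s (j - i₀ - 1) (j' - i₀ - 1) (by omega) ?_ hcol
      have h3 : (j' - i₀ - 1) - (j - i₀ - 1) = nn - (nn - (j' - j)) := by omega
      rw [h3]; exact not_dvd_sub s nn _ hs hmod (by omega) (by omega) (by omega)
  · by_cases h2 : i₀ < j'
    · rw [if_neg h1, if_pos h2] at hcol
      -- j < i₀ < j'
      rcases hcross with hc | hc
      · refine mod_ne s (j' - i₀ - 1) (j + nn - i₀ - 1) (by omega) ?_ hcol.symm
        have h3 : (j + nn - i₀ - 1) - (j' - i₀ - 1) = nn - (j' - j) := by omega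
        rw [h3]; exact not_dvd_sub s nn _ hs hmod (by omega) (by omega) (by omega)
      · refine mod_ne s (j' - i₀ - 1) (j + nn - i₀ - 1) (by omega) ?_ hcol.symm
        have h3 : (j + nn - i₀ - 1) - (j' - i₀ - 1) = nn - (j' - j) := by omega
        rw [h3]; exact not_dvd_lt s _ (by omega) (by omega)
    · rw [if_neg h1, if_neg h2] at hcol
      -- j < j' < i₀
      rcases hcross with hc | hc
      · refine mod_ne s (j + nn - i₀ - 1) (j' + nn - i₀ - 1) (by omega) ?_ hcol
        have h3 : (j' + nn - i₀ - 1) - (j + nn - i₀ - 1) = j' - j := by omega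
        rw [h3]; exact not_dvd_lt s _ (by omega) hc
      · refine mod_ne s (j + nn - i₀ - 1) (j' + nn - i₀ - 1) (by omega) ?_ hcol
        have h3 : (j' + nn - i₀ - 1) - (j + nn - i₀ - 1) = nn - (nn - (j' - j)) := by omega
        rw [h3]; exact not_dvd_sub s nn _ hs hmod (by omega) (by omega) (by omega)

/-- the color function used for deletion layouts. -/
def colorF (s nn i₀ : ℕ) {N : ℕ} (p : Fin N × Fin N) : ℕ :=
  (((if (p.1 : ℕ) % 2 = 0 then (p.1 : ℕ)/2 else (p.2 : ℕ)/2) + nn - (i₀+1)) % nn) % s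

lemma idx_edgeF (s nn : ℕ) (hs : 2 ≤ s) (hnn : 3*s ≤ nn) (j : Fin nn) :
    (if ((edgeF s nn hs hnn j).1 : ℕ) % 2 = 0 then ((edgeF s nn hs hnn j).1 : ℕ) / 2
     else ((edgeF s nn hs hnn j).2 : ℕ) / 2) = (j : ℕ) := by
  have := j.isLt
  show (if (eA s nn j) % 2 = 0 then (eA s nn j) / 2 else (eB s nn j) / 2) = (j : ℕ)
  unfold eA eB
  split_ifs <;> omega

lemma erase_layout (s nn : ℕ) (hs : 2 ≤ s) (hnn : 3*s ≤ nn) (hmod : nn % s = 1)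
    (i₀ : Fin nn) :
    ((Gr s nn hs hnn).erase (edgeF s nn hs hnn i₀)).HasLayout s 0 := by
  have h0 : 0 < s := by omega
  refine ⟨colorF s nn (i₀ : ℕ), ?_, ?_⟩
  · intro e he
    exact lt_of_lt_of_le (Nat.mod_lt _ h0) (le_of_eq (Nat.add_zero s).symm)
  · intro e he f hf hcc
    have hsmod : ∀ x : ℕ, x % s < s := fun x => Nat.mod_lt _ h0
    refine ⟨fun _ => ?_, fun hge => absurd hge (not_le.mpr (hsmod _))⟩
    obtain ⟨j, -, hj⟩ := Finset.mem_image.mp (Finset.mem_of_mem_erase he)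
    obtain ⟨j', -, hj'⟩ := Finset.mem_image.mp (Finset.mem_of_mem_erase hf)
    subst hj hj'
    have hjne : (j : ℕ) ≠ (i₀ : ℕ) := by
      intro h
      exact Finset.ne_of_mem_erase he (by rw [Fin.ext h])
    have hj'ne : (j' : ℕ) ≠ (i₀ : ℕ) := by
      intro h
      exact Finset.ne_of_mem_erase hf (by rw [Fin.ext h])
    have hcj : colorF s nn (i₀ : ℕ) (edgeF s nn hs hnn j)
        = (((j : ℕ) + nn - ((i₀ : ℕ)+1)) % nn) % s := by
      unfold colorF; rw [idx_edgeF s nn hs hnn j]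
    have hcj' : colorF s nn (i₀ : ℕ) (edgeF s nn hs hnn j')
        = (((j' : ℕ) + nn - ((i₀ : ℕ)+1)) % nn) % s := by
      unfold colorF; rw [idx_edgeF s nn hs hnn j']
    have hcc2 : (((j : ℕ) + nn - ((i₀ : ℕ)+1)) % nn) % s
        = (((j' : ℕ) + nn - ((i₀ : ℕ)+1)) % nn) % s := by
      rw [← hcj, ← hcj']; exact hcc
    rcases lt_trichotomy (j : ℕ) (j' : ℕ) with h | h | h
    · exact (cross_iff s nn hs hnn j j' h).not.mpr
        (same_color_not_cross s nn hs hnn hmod i₀ j j' i₀.isLt j.isLt j'.isLt h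
          hjne hj'ne hcc2)
    · rw [Fin.ext h]
      exact cross_irrefl _
    · refine mt (cross_symm _ _).mp ?_
      exact (cross_iff s nn hs hnn j' j h).not.mpr
        (same_color_not_cross s nn hs hnn hmod i₀ j' j i₀.isLt j'.isLt j.isLt h
          hj'ne hjne hcc2.symm)

/-! ### the graph is a matching -/

lemma endpoint_unique (s nn : ℕ) (hs : 2 ≤ s) (hnn : 3*s ≤ nn) (v i i' : ℕ)
    (hi : i < nn) (hi' : i' < nn)
    (h1 : eA s nn i = v ∨ eB s nn i = v) (h2 : eA s nn i' = v ∨ eB s nn i' = v) :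
    i = i' := by
  unfold eA eB at h1 h2
  split_ifs at h1 h2 <;> omega

lemma endpoint_exists (s nn : ℕ) (hs : 2 ≤ s) (hnn : 3*s ≤ nn) (v : Fin (2*nn)) :
    ∃ i : Fin nn, eA s nn i = (v : ℕ) ∨ eB s nn i = (v : ℕ) := by
  have hv := v.isLt
  by_cases hpar : (v : ℕ) % 2 = 0
  · refine ⟨⟨(v : ℕ)/2, by omega⟩, ?_⟩
    show eA s nn ((v:ℕ)/2) = (v:ℕ) ∨ eB s nn ((v:ℕ)/2) = (v:ℕ)
    unfold eA eB; split_ifs <;> omega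
  · by_cases hL : 2*s - 1 ≤ (v : ℕ)
    · refine ⟨⟨((v : ℕ) - (2*s-1))/2, by omega⟩, Or.inr ?_⟩
      show eB s nn (((v:ℕ) - (2*s-1))/2) = (v:ℕ)
      unfold eB; split_ifs <;> omega
    · refine ⟨⟨((v : ℕ) + 2*nn - (2*s-1))/2, by omega⟩, Or.inl ?_⟩
      show eA s nn (((v:ℕ) + 2*nn - (2*s-1))/2) = (v:ℕ)
      unfold eA; split_ifs <;> omega

lemma matching (s nn : ℕ) (hs : 2 ≤ s) (hnn : 3*s ≤ nn) :
    (Gr s nn hs hnn).IsMatching := by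
  intro v
  obtain ⟨i, hi⟩ := endpoint_exists s nn hs hnn v
  show ((Gr s nn hs hnn).E.filter fun e => e.1 = v ∨ e.2 = v).card = 1
  rw [Finset.card_eq_one]
  refine ⟨edgeF s nn hs hnn i, ?_⟩
  have hifin : (edgeF s nn hs hnn i).1 = v ∨ (edgeF s nn hs hnn i).2 = v := by
    rcases hi with h | h
    · exact Or.inl (Fin.ext h)
    · exact Or.inr (Fin.ext h)
  ext x
  simp only [Finset.mem_filter, Finset.mem_singleton]
  constructor
  · rintro ⟨hxE, hxv⟩
    obtain ⟨j, -, rfl⟩ := Finset.mem_image.mp hxE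
    have hjv : eA s nn (j:ℕ) = (v:ℕ) ∨ eB s nn (j:ℕ) = (v:ℕ) := by
      rcases hxv with h | h
      · exact Or.inl (congrArg Fin.val h)
      · exact Or.inr (congrArg Fin.val h)
    have : (j : ℕ) = (i : ℕ) :=
      endpoint_unique s nn hs hnn (v:ℕ) j i j.isLt i.isLt hjv hi
    rw [Fin.ext this]
    exact Finset.mem_singleton_self _
  · intro hx; obtain rfl := Finset.eq_of_mem_singleton hx
    exact ⟨Finset.mem_image_of_mem _ (Finset.mem_univ i), hifin⟩


/-- For every `s ≥ 2` and every `n ≥ 3`, there exists an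
`(s,0)`-critical ordered matching with at least `n` vertices. -/
theorem exists_large_s0_critical_matching (s n : ℕ) (hs : 2 ≤ s) (hn : 3 ≤ n) :
    ∃ G : OGraph, G.IsMatching ∧ n ≤ G.n ∧ G.IsSQCritical s 0 := by
  have h1 : 3*s ≤ n*s := Nat.mul_le_mul_right s hn
  have hnn : 3*s ≤ n*s+1 := le_trans h1 (Nat.le_succ _)
  have hmod : (n*s+1) % s = 1 := by
    rw [Nat.add_comm, Nat.add_mul_mod_self_right, Nat.mod_eq_of_lt (by omega)]
  refine ⟨Gr s (n*s+1) hs hnn, matching s (n*s+1) hs hnn, ?_, ?_, ?_⟩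
  · show n ≤ 2*(n*s+1)
    have h2 : n ≤ n*s := Nat.le_mul_of_pos_right n (by omega)
    linarith
  · exact no_layout s (n*s+1) n hs hnn rfl
  · intro e he
    obtain ⟨i₀, -, rfl⟩ := Finset.mem_image.mp he
    exact erase_layout s (n*s+1) hs hnn hmod i₀


end MixedLayouts
end

section
/- For every n ≥ 3, there exists a 2-critical ordered matching with at least n vertices. -/
namespace MixedLayouts
namespace Crit

/-- Left endpoint of edge `t` of the construction graph with parameter `k`. -/
def edL (k t : ℕ) : ℕ :=
  if t ≤ 2*k then 2*t
  else if t = 2*k+1 then 4*k+2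
  else if t = 2*k+2 then 1
  else if t = 2*k+3 then 4*k+5
  else if t = 2*k+4 then 4*k+6
  else if t = 2*k+5 then 4*k+7
  else 4*k+10

/-- Right endpoint of edge `t` of the construction graph with parameter `k`. -/
def edR (k t : ℕ) : ℕ :=
  if t ≤ 2*k then 2*t+3
  else if t = 2*k+1 then 4*k+9
  else if t = 2*k+2 then 4*k+4
  else if t = 2*k+3 then 4*k+8
  else if t = 2*k+4 then 4*k+13
  else if t = 2*k+5 then 4*k+12
  else 4*k+11

lemma edL_0 {k t : ℕ} (h : t ≤ 2*k) : edL k t = 2*t := by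
  unfold edL; rw [if_pos h]
lemma edR_0 {k t : ℕ} (h : t ≤ 2*k) : edR k t = 2*t+3 := by
  unfold edR; rw [if_pos h]
lemma edL_1 {k : ℕ} : edL k (2*k+1) = 4*k+2 := by
  unfold edL; rw [if_neg (by omega), if_pos rfl]
lemma edR_1 {k : ℕ} : edR k (2*k+1) = 4*k+9 := by
  unfold edR; rw [if_neg (by omega), if_pos rfl]
lemma edL_2 {k : ℕ} : edL k (2*k+2) = 1 := by
  unfold edL; rw [if_neg (by omega), if_neg (by omega), if_pos rfl]
lemma edR_2 {k : ℕ} : edR k (2*k+2) = 4*k+4 := by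
  unfold edR; rw [if_neg (by omega), if_neg (by omega), if_pos rfl]
lemma edL_3 {k : ℕ} : edL k (2*k+3) = 4*k+5 := by
  unfold edL; rw [if_neg (by omega), if_neg (by omega), if_neg (by omega), if_pos rfl]
lemma edR_3 {k : ℕ} : edR k (2*k+3) = 4*k+8 := by
  unfold edR; rw [if_neg (by omega), if_neg (by omega), if_neg (by omega), if_pos rfl]
lemma edL_4 {k : ℕ} : edL k (2*k+4) = 4*k+6 := by
  unfold edL
  rw [if_neg (by omega), if_neg (by omega), if_neg (by omega), if_neg (by omega), if_pos rfl]
lemma edR_4 {k : ℕ} : edR k (2*k+4) = 4*k+13 := by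
  unfold edR
  rw [if_neg (by omega), if_neg (by omega), if_neg (by omega), if_neg (by omega), if_pos rfl]
lemma edL_5 {k : ℕ} : edL k (2*k+5) = 4*k+7 := by
  unfold edL
  rw [if_neg (by omega), if_neg (by omega), if_neg (by omega), if_neg (by omega),
    if_neg (by omega), if_pos rfl]
lemma edR_5 {k : ℕ} : edR k (2*k+5) = 4*k+12 := by
  unfold edR
  rw [if_neg (by omega), if_neg (by omega), if_neg (by omega), if_neg (by omega),
    if_neg (by omega), if_pos rfl]
lemma edL_6 {k t : ℕ} (h : 2*k+6 ≤ t) : edL k t = 4*k+10 := by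
  unfold edL
  rw [if_neg (by omega), if_neg (by omega), if_neg (by omega), if_neg (by omega),
    if_neg (by omega), if_neg (by omega)]
lemma edR_6 {k t : ℕ} (h : 2*k+6 ≤ t) : edR k t = 4*k+11 := by
  unfold edR
  rw [if_neg (by omega), if_neg (by omega), if_neg (by omega), if_neg (by omega),
    if_neg (by omega), if_neg (by omega)]

/-- Case principle computing both endpoints of edge `t`. -/
lemma ed_cases (k t : ℕ) :
    (t ≤ 2*k ∧ edL k t = 2*t ∧ edR k t = 2*t+3) ∨
    (t = 2*k+1 ∧ edL k t = 4*k+2 ∧ edR k t = 4*k+9) ∨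
    (t = 2*k+2 ∧ edL k t = 1 ∧ edR k t = 4*k+4) ∨
    (t = 2*k+3 ∧ edL k t = 4*k+5 ∧ edR k t = 4*k+8) ∨
    (t = 2*k+4 ∧ edL k t = 4*k+6 ∧ edR k t = 4*k+13) ∨
    (t = 2*k+5 ∧ edL k t = 4*k+7 ∧ edR k t = 4*k+12) ∨
    (2*k+6 ≤ t ∧ edL k t = 4*k+10 ∧ edR k t = 4*k+11) := by
  by_cases h0 : t ≤ 2*k
  · exact Or.inl ⟨h0, edL_0 h0, edR_0 h0⟩
  by_cases h1 : t = 2*k+1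
  · subst h1; exact Or.inr (Or.inl ⟨rfl, edL_1, edR_1⟩)
  by_cases h2 : t = 2*k+2
  · subst h2; exact Or.inr (Or.inr (Or.inl ⟨rfl, edL_2, edR_2⟩))
  by_cases h3 : t = 2*k+3
  · subst h3; exact Or.inr (Or.inr (Or.inr (Or.inl ⟨rfl, edL_3, edR_3⟩)))
  by_cases h4 : t = 2*k+4
  · subst h4; exact Or.inr (Or.inr (Or.inr (Or.inr (Or.inl ⟨rfl, edL_4, edR_4⟩))))
  by_cases h5 : t = 2*k+5
  · subst h5; exact Or.inr (Or.inr (Or.inr (Or.inr (Or.inr (Or.inl ⟨rfl, edL_5, edR_5⟩)))))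
  have h6 : 2*k+6 ≤ t := by omega
  exact Or.inr (Or.inr (Or.inr (Or.inr (Or.inr (Or.inr ⟨h6, edL_6 h6, edR_6 h6⟩)))))

lemma edL_lt (k t : ℕ) : edL k t < 4*k+14 := by
  have := ed_cases k t; omega
lemma edR_lt (k t : ℕ) : edR k t < 4*k+14 := by
  have := ed_cases k t; omega
lemma edL_lt_edR (k t : ℕ) : edL k t < edR k t := by
  have := ed_cases k t; omega

/-- The edges as pairs of `Fin (4k+14)`. -/
def edF (k t : ℕ) : Fin (4*k+14) × Fin (4*k+14) :=
  (⟨edL k t, edL_lt k t⟩, ⟨edR k t, edR_lt k t⟩)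

/-- The construction graph. -/
def Gk (k : ℕ) : OGraph :=
  ⟨4*k+14, (Finset.range (2*k+7)).image (edF k), by
    intro e he
    simp only [Finset.mem_image, Finset.mem_range] at he
    obtain ⟨t, _, rfl⟩ := he
    exact Fin.mk_lt_mk.2 (edL_lt_edR k t)⟩

lemma mem_E {k : ℕ} {e : Fin (4*k+14) × Fin (4*k+14)} :
    e ∈ (Gk k).E ↔ ∃ t, t < 2*k+7 ∧ edF k t = e := by
  show e ∈ (Finset.range (2*k+7)).image (edF k) ↔ _
  simp [Finset.mem_image, Finset.mem_range]

lemma edF_mem {k t : ℕ} (ht : t < 2*k+7) : edF k t ∈ (Gk k).E :=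
  mem_E.2 ⟨t, ht, rfl⟩

lemma touch_inj {k t t' x : ℕ} (ht : t < 2*k+7) (ht' : t' < 2*k+7)
    (h1 : edL k t = x ∨ edR k t = x) (h2 : edL k t' = x ∨ edR k t' = x) : t = t' := by
  have := ed_cases k t; have := ed_cases k t'; omega

lemma edF_inj {k t t' : ℕ} (ht : t < 2*k+7) (ht' : t' < 2*k+7)
    (h : edF k t = edF k t') : t = t' := by
  have h1 : edL k t = edL k t' := congrArg (fun e => e.1.val) h
  exact touch_inj ht ht' (Or.inl h1) (Or.inl rfl)

/-- Characterization of crossing pairs of edges. -/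
lemma cross_char {k : ℕ} (t t' : ℕ) (ht : t < 2*k+7) (ht' : t' < 2*k+7) :
    Cross (edF k t) (edF k t') ↔
      ((t' = t+1 ∧ t' ≤ 2*k+2) ∨ (t = 0 ∧ t' = 2*k+2) ∨
        ((t = 2*k+1 ∨ t = 2*k+3) ∧ (t' = 2*k+4 ∨ t' = 2*k+5)) ∨
       (t = t'+1 ∧ t ≤ 2*k+2) ∨ (t' = 0 ∧ t = 2*k+2) ∨
        ((t' = 2*k+1 ∨ t' = 2*k+3) ∧ (t = 2*k+4 ∨ t = 2*k+5))) := by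
  simp only [Cross, edF, Fin.mk_lt_mk]
  rcases ed_cases k t with ⟨h1,h2,h3⟩|⟨h1,h2,h3⟩|⟨h1,h2,h3⟩|⟨h1,h2,h3⟩|⟨h1,h2,h3⟩|⟨h1,h2,h3⟩|⟨h1,h2,h3⟩ <;>
    rcases ed_cases k t' with ⟨g1,g2,g3⟩|⟨g1,g2,g3⟩|⟨g1,g2,g3⟩|⟨g1,g2,g3⟩|⟨g1,g2,g3⟩|⟨g1,g2,g3⟩|⟨g1,g2,g3⟩ <;> rw [h2,h3,g2,g3] <;> omega

set_option maxHeartbeats 800000 in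
/-- Characterization of nesting pairs of edges. -/
lemma nest_char {k : ℕ} (t t' : ℕ) (ht : t < 2*k+7) (ht' : t' < 2*k+7) :
    Nest (edF k t) (edF k t') ↔
      ((t = 2*k+2 ∧ 1 ≤ t' ∧ t' ≤ 2*k) ∨ (t = 2*k+1 ∧ t' = 2*k+3) ∨
        (t = 2*k+4 ∧ (t' = 2*k+5 ∨ t' = 2*k+6)) ∨ (t = 2*k+5 ∧ t' = 2*k+6) ∨
       (t' = 2*k+2 ∧ 1 ≤ t ∧ t ≤ 2*k) ∨ (t' = 2*k+1 ∧ t = 2*k+3) ∨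
        (t' = 2*k+4 ∧ (t = 2*k+5 ∨ t = 2*k+6)) ∨ (t' = 2*k+5 ∧ t = 2*k+6)) := by
  simp only [Nest, edF, Fin.mk_lt_mk]
  rcases ed_cases k t with ⟨h1,h2,h3⟩|⟨h1,h2,h3⟩|⟨h1,h2,h3⟩|⟨h1,h2,h3⟩|⟨h1,h2,h3⟩|⟨h1,h2,h3⟩|⟨h1,h2,h3⟩ <;>
    rcases ed_cases k t' with ⟨g1,g2,g3⟩|⟨g1,g2,g3⟩|⟨g1,g2,g3⟩|⟨g1,g2,g3⟩|⟨g1,g2,g3⟩|⟨g1,g2,g3⟩|⟨g1,g2,g3⟩ <;> rw [h2,h3,g2,g3] <;> omega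

end Crit
end MixedLayouts
namespace MixedLayouts
namespace Crit

lemma cross_irrefl {n : ℕ} (e : Fin n × Fin n) : ¬ Cross e e := by
  rintro (⟨h, -⟩ | ⟨h, -⟩) <;> exact lt_irrefl _ h

lemma nest_irrefl {n : ℕ} (e : Fin n × Fin n) : ¬ Nest e e := by
  rintro (⟨h, -⟩ | ⟨h, -⟩) <;> exact lt_irrefl _ h

/-- Every vertex is an endpoint of some edge. -/
lemma cover {k x : ℕ} (hx : x < 4*k+14) :
    ∃ t, t < 2*k+7 ∧ (edL k t = x ∨ edR k t = x) := by
  rcases Nat.even_or_odd x with ⟨y, rfl⟩ | ⟨y, rfl⟩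
  · by_cases h : y ≤ 2*k
    · exact ⟨y, by omega, Or.inl (by rw [edL_0 h]; omega)⟩
    · have h6 : y+y = 4*k+2 ∨ y+y = 4*k+4 ∨ y+y = 4*k+6 ∨ y+y = 4*k+8 ∨
          y+y = 4*k+10 ∨ y+y = 4*k+12 := by omega
      rcases h6 with h|h|h|h|h|h
      · exact ⟨2*k+1, by omega, Or.inl (by rw [edL_1]; omega)⟩
      · exact ⟨2*k+2, by omega, Or.inr (by rw [edR_2]; omega)⟩
      · exact ⟨2*k+4, by omega, Or.inl (by rw [edL_4]; omega)⟩
      · exact ⟨2*k+3, by omega, Or.inr (by rw [edR_3]; omega)⟩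
      · exact ⟨2*k+6, by omega, Or.inl (by rw [edL_6 (le_refl _)]; omega)⟩
      · exact ⟨2*k+5, by omega, Or.inr (by rw [edR_5]; omega)⟩
  · by_cases h : 1 ≤ y ∧ y ≤ 2*k+1
    · exact ⟨y-1, by omega, Or.inr (by rw [edR_0 (by omega)]; omega)⟩
    · have h6 : 2*y+1 = 1 ∨ 2*y+1 = 4*k+5 ∨ 2*y+1 = 4*k+7 ∨ 2*y+1 = 4*k+9 ∨
          2*y+1 = 4*k+11 ∨ 2*y+1 = 4*k+13 := by omega
      rcases h6 with h|h|h|h|h|h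
      · exact ⟨2*k+2, by omega, Or.inl (by rw [edL_2]; omega)⟩
      · exact ⟨2*k+3, by omega, Or.inl (by rw [edL_3]; omega)⟩
      · exact ⟨2*k+5, by omega, Or.inl (by rw [edL_5]; omega)⟩
      · exact ⟨2*k+1, by omega, Or.inr (by rw [edR_1]; omega)⟩
      · exact ⟨2*k+6, by omega, Or.inr (by rw [edR_6 (le_refl _)]; omega)⟩
      · exact ⟨2*k+4, by omega, Or.inr (by rw [edR_4]; omega)⟩

lemma degree_eq_one (k : ℕ) (v : Fin ((Gk k).n)) : (Gk k).degree v = 1 := by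
  have hv : (v : ℕ) < 4*k+14 := v.isLt
  obtain ⟨t₀, ht₀, hx⟩ := cover hv
  rw [OGraph.degree, Finset.card_eq_one]
  refine ⟨edF k t₀, ?_⟩
  ext f
  simp only [Finset.mem_filter, Finset.mem_singleton]
  constructor
  · rintro ⟨hf, htouch⟩
    obtain ⟨t', ht', rfl⟩ := mem_E.1 hf
    have h' : edL k t' = (v : ℕ) ∨ edR k t' = (v : ℕ) := by
      rcases htouch with h|h
      · exact Or.inl (congrArg Fin.val h)
      · exact Or.inr (congrArg Fin.val h)
    rw [touch_inj ht' ht₀ h' hx]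
    exact Finset.mem_singleton_self _
  · intro hf
    obtain rfl := Finset.mem_singleton.1 hf
    refine ⟨edF_mem ht₀, ?_⟩
    rcases hx with h|h
    · exact Or.inl (Fin.ext h)
    · exact Or.inr (Fin.ext h)

lemma isMatching_Gk (k : ℕ) : (Gk k).IsMatching := fun v => degree_eq_one k v

/-- Recover the index of an edge. -/
noncomputable def idx (k : ℕ) (e : Fin (4*k+14) × Fin (4*k+14)) : ℕ :=
  if h : ∃ t, t < 2*k+7 ∧ edF k t = e then h.choose else 0

lemma idx_edF {k t : ℕ} (ht : t < 2*k+7) : idx k (edF k t) = t := by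
  have h : ∃ t', t' < 2*k+7 ∧ edF k t' = edF k t := ⟨t, ht, rfl⟩
  rw [idx, dif_pos h]
  exact edF_inj h.choose_spec.1 ht h.choose_spec.2

/-- Monotonicity of layouts. -/
lemma layout_mono {G : OGraph} {s q s' q' : ℕ} (h : G.HasLayout s q)
    (hs : s ≤ s') (hq : q ≤ q') : G.HasLayout s' q' := by
  obtain ⟨c, h1, h2⟩ := h
  refine ⟨fun e => if c e < s then c e else c e + (s' - s), ?_, ?_⟩
  · intro e he
    have := h1 e he
    show (if c e < s then c e else c e + (s' - s)) < s' + q'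
    split_ifs <;> omega
  · intro e he f hf hcef
    have hce := h1 e he
    have hcf := h1 f hf
    have h2' := h2 e he f hf
    have hcef' : (if c e < s then c e else c e + (s' - s)) =
        (if c f < s then c f else c f + (s' - s)) := hcef
    constructor
    · show (if c e < s then c e else c e + (s' - s)) < s' → _
      intro hlt
      by_cases hc : c e < s
      · by_cases hd : c f < s
        · rw [if_pos hc, if_pos hd] at hcef'
          exact (h2' hcef').1 hc
        · rw [if_pos hc, if_neg hd] at hcef'
          exact absurd hcef' (by omega)
      · rw [if_neg hc] at hlt
        exact absurd hlt (by omega)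
    · show s' ≤ (if c e < s then c e else c e + (s' - s)) → _
      intro hge
      by_cases hc : c e < s
      · rw [if_pos hc] at hge
        exact absurd hge (by omega)
      · by_cases hd : c f < s
        · rw [if_neg hc, if_pos hd] at hcef'
          exact absurd hcef' (by omega)
        · rw [if_neg hc, if_neg hd] at hcef'
          exact (h2' (by omega)).2 (by omega)

lemma hasLayout_top (k : ℕ) : (Gk k).HasLayout (2*k+7) 0 := by
  refine ⟨idx k, ?_, ?_⟩
  · intro e he
    obtain ⟨t, ht, rfl⟩ := mem_E.1 he
    rw [idx_edF ht]; omega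
  · intro e he f hf hc
    obtain ⟨t, ht, rfl⟩ := mem_E.1 he
    obtain ⟨t', ht', rfl⟩ := mem_E.1 hf
    rw [idx_edF ht, idx_edF ht'] at hc
    subst hc
    exact ⟨fun _ => cross_irrefl _, fun _ => nest_irrefl _⟩

/-- No 2-stack layout: the odd crossing cycle. -/
lemma not20 (k : ℕ) : ¬ (Gk k).HasLayout 2 0 := by
  rintro ⟨c, hb, hcon⟩
  have hlt : ∀ t, t < 2*k+7 → c (edF k t) < 2 := by
    intro t ht; have := hb _ (edF_mem ht); omega
  have hne : ∀ t, t ≤ 2*k+1 → c (edF k t) ≠ c (edF k (t+1)) := by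
    intro t ht heq
    have hcr : Cross (edF k t) (edF k (t+1)) := by
      rw [cross_char t (t+1) (by omega) (by omega)]; omega
    exact (hcon _ (edF_mem (by omega)) _ (edF_mem (by omega)) heq).1
      (by have := hlt t (by omega); omega) hcr
  have hwrap : c (edF k (2*k+2)) ≠ c (edF k 0) := by
    intro heq
    have hcr : Cross (edF k (2*k+2)) (edF k 0) := by
      rw [cross_char _ _ (by omega) (by omega)]; omega
    exact (hcon _ (edF_mem (by omega)) _ (edF_mem (by omega)) heq).1
      (by have := hlt (2*k+2) (by omega); omega) hcr
  have key : ∀ j, j ≤ 2*k+2 →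
      ((j % 2 = 0 ∧ c (edF k j) = c (edF k 0)) ∨
        (j % 2 = 1 ∧ c (edF k j) ≠ c (edF k 0))) := by
    intro j
    induction j with
    | zero => intro _; exact Or.inl ⟨by omega, rfl⟩
    | succ i ih =>
      intro hj
      have h1 := ih (by omega)
      have h2 := hne i (by omega)
      have b1 := hlt i (by omega)
      have b2 := hlt (i+1) (by omega)
      have b0 := hlt 0 (by omega)
      omega
  have hfin := key (2*k+2) (le_refl _)
  omega

/-- No 2-queue layout: the nesting triangle `D1, D2, E`. -/
lemma not02 (k : ℕ) : ¬ (Gk k).HasLayout 0 2 := by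
  rintro ⟨c, hb, hcon⟩
  have n1 : Nest (edF k (2*k+4)) (edF k (2*k+5)) := by
    rw [nest_char _ _ (by omega) (by omega)]; omega
  have n2 : Nest (edF k (2*k+4)) (edF k (2*k+6)) := by
    rw [nest_char _ _ (by omega) (by omega)]; omega
  have n3 : Nest (edF k (2*k+5)) (edF k (2*k+6)) := by
    rw [nest_char _ _ (by omega) (by omega)]; omega
  have b1 := hb _ (edF_mem (k := k) (t := 2*k+4) (by omega))
  have b2 := hb _ (edF_mem (k := k) (t := 2*k+5) (by omega))
  have b3 := hb _ (edF_mem (k := k) (t := 2*k+6) (by omega))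
  have h : c (edF k (2*k+4)) = c (edF k (2*k+5)) ∨
      c (edF k (2*k+4)) = c (edF k (2*k+6)) ∨
      c (edF k (2*k+5)) = c (edF k (2*k+6)) := by omega
  rcases h with h|h|h
  · exact (hcon _ (edF_mem (by omega)) _ (edF_mem (by omega)) h).2 (by omega) n1
  · exact (hcon _ (edF_mem (by omega)) _ (edF_mem (by omega)) h).2 (by omega) n2
  · exact (hcon _ (edF_mem (by omega)) _ (edF_mem (by omega)) h).2 (by omega) n3

/-- No 1-stack 1-queue layout. -/
lemma not11 (k : ℕ) : ¬ (Gk k).HasLayout 1 1 := by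
  rintro ⟨c, hb, hcon⟩
  have bB := hb _ (edF_mem (k := k) (t := 2*k+1) (by omega))
  have bC := hb _ (edF_mem (k := k) (t := 2*k+3) (by omega))
  have b1 := hb _ (edF_mem (k := k) (t := 2*k+4) (by omega))
  have b2 := hb _ (edF_mem (k := k) (t := 2*k+5) (by omega))
  have main : ∀ t, (t = 2*k+4 ∨ t = 2*k+5) → c (edF k t) = 0 → False := by
    intro t htt hc0
    have ht7 : t < 2*k+7 := by omega
    have hcrB : Cross (edF k (2*k+1)) (edF k t) := by
      rw [cross_char _ _ (by omega) ht7]; omega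
    have hcrC : Cross (edF k (2*k+3)) (edF k t) := by
      rw [cross_char _ _ (by omega) ht7]; omega
    have hbt := hb _ (edF_mem ht7)
    have hB1 : c (edF k (2*k+1)) = 1 := by
      by_contra hB
      have heq : c (edF k (2*k+1)) = c (edF k t) := by omega
      exact (hcon _ (edF_mem (by omega)) _ (edF_mem ht7) heq).1 (by omega) hcrB
    have hC1 : c (edF k (2*k+3)) = 1 := by
      by_contra hC
      have heq : c (edF k (2*k+3)) = c (edF k t) := by omega
      exact (hcon _ (edF_mem (by omega)) _ (edF_mem ht7) heq).1 (by omega) hcrC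
    have hnBC : Nest (edF k (2*k+1)) (edF k (2*k+3)) := by
      rw [nest_char _ _ (by omega) (by omega)]; omega
    exact (hcon _ (edF_mem (by omega)) _ (edF_mem (by omega))
      (hB1.trans hC1.symm)).2 (by omega) hnBC
  have hnD : Nest (edF k (2*k+4)) (edF k (2*k+5)) := by
    rw [nest_char _ _ (by omega) (by omega)]; omega
  have hDor : c (edF k (2*k+4)) = 0 ∨ c (edF k (2*k+5)) = 0 := by
    by_contra hD
    have heq : c (edF k (2*k+4)) = c (edF k (2*k+5)) := by omega
    exact (hcon _ (edF_mem (by omega)) _ (edF_mem (by omega)) heq).2 (by omega) hnD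
  rcases hDor with h|h
  · exact main _ (Or.inl rfl) h
  · exact main _ (Or.inr rfl) h

/-- The mixed page number of `Gk` exceeds 2. -/
lemma mn_gt_two (k : ℕ) : 2 < (Gk k).mn := by
  unfold OGraph.mn
  have h3 : ∀ b ∈ {m | ∃ s q, s + q = m ∧ (Gk k).HasLayout s q}, 3 ≤ b := by
    rintro b ⟨s, q, rfl, hl⟩
    by_contra hb
    push_neg at hb
    by_cases hq : q = 0
    · subst hq
      exact not20 k (layout_mono hl (show s ≤ 2 by omega) (le_refl 0))
    by_cases hs : s = 0
    · subst hs
      exact not02 k (layout_mono hl (le_refl 0) (show q ≤ 2 by omega))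
    · have hs1 : s = 1 := by omega
      have hq1 : q = 1 := by omega
      subst hs1; subst hq1
      exact not11 k hl
  have hne : {m | ∃ s q, s + q = m ∧ (Gk k).HasLayout s q}.Nonempty :=
    ⟨2*k+7, 2*k+7, 0, rfl, hasLayout_top k⟩
  exact lt_of_lt_of_le (by omega) (le_csInf hne h3)

end Crit
end MixedLayouts
namespace MixedLayouts
namespace Crit

/-- Stack 2-coloring used when a cycle edge `d ≤ 2k+2` is deleted. -/
def colA (k d t : ℕ) : ℕ :=
  if t ≤ 2*k+2 then (if t < d then (t+1) % 2 else t % 2)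
  else if t = 2*k+3 then (if 2*k+1 < d then 0 else 1)
  else if t ≤ 2*k+5 then (if 2*k+1 < d then 1 else 0)
  else 0

lemma colA_cases (k d t : ℕ) :
    (t ≤ 2*k+2 ∧ t < d ∧ colA k d t = (t+1) % 2) ∨
    (t ≤ 2*k+2 ∧ ¬(t < d) ∧ colA k d t = t % 2) ∨
    (t = 2*k+3 ∧ 2*k+1 < d ∧ colA k d t = 0) ∨
    (t = 2*k+3 ∧ ¬(2*k+1 < d) ∧ colA k d t = 1) ∨
    ((t = 2*k+4 ∨ t = 2*k+5) ∧ 2*k+1 < d ∧ colA k d t = 1) ∨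
    ((t = 2*k+4 ∨ t = 2*k+5) ∧ ¬(2*k+1 < d) ∧ colA k d t = 0) ∨
    (2*k+6 ≤ t ∧ colA k d t = 0) := by
  unfold colA; split_ifs <;> omega

/-- Queue/stack coloring used when `C` is deleted. -/
def colB (k t : ℕ) : ℕ := if t = 2*k+2 ∨ 2*k+4 ≤ t then 0 else 1

lemma colB_cases (k t : ℕ) :
    ((t = 2*k+2 ∨ 2*k+4 ≤ t) ∧ colB k t = 0) ∨
    (¬(t = 2*k+2 ∨ 2*k+4 ≤ t) ∧ colB k t = 1) := by
  unfold colB; split_ifs <;> omega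

/-- Queue 2-coloring used when `D1` is deleted. -/
def colC (k t : ℕ) : ℕ := if t = 2*k+2 ∨ t = 2*k+3 ∨ t = 2*k+6 then 0 else 1

lemma colC_cases (k t : ℕ) :
    ((t = 2*k+2 ∨ t = 2*k+3 ∨ t = 2*k+6) ∧ colC k t = 0) ∨
    (¬(t = 2*k+2 ∨ t = 2*k+3 ∨ t = 2*k+6) ∧ colC k t = 1) := by
  unfold colC; split_ifs <;> omega

/-- Queue 2-coloring used when `D2` or `E` is deleted. -/
def colD (k t : ℕ) : ℕ := if t = 2*k+2 ∨ t = 2*k+3 ∨ t = 2*k+4 then 0 else 1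

lemma colD_cases (k t : ℕ) :
    ((t = 2*k+2 ∨ t = 2*k+3 ∨ t = 2*k+4) ∧ colD k t = 0) ∨
    (¬(t = 2*k+2 ∨ t = 2*k+3 ∨ t = 2*k+4) ∧ colD k t = 1) := by
  unfold colD; split_ifs <;> omega

lemma mem_erase_E {k d : ℕ} (hd : d < 2*k+7) {e : Fin (4*k+14) × Fin (4*k+14)} :
    e ∈ ((Gk k).erase (edF k d)).E ↔ ∃ t, t < 2*k+7 ∧ t ≠ d ∧ edF k t = e := by
  show e ∈ (Gk k).E.erase (edF k d) ↔ _
  refine Finset.mem_erase.trans ?_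
  constructor
  · rintro ⟨hne, hmem⟩
    obtain ⟨t, ht, rfl⟩ := mem_E.1 hmem
    exact ⟨t, ht, fun h => hne (by rw [h]), rfl⟩
  · rintro ⟨t, ht, htd, rfl⟩
    exact ⟨fun h => htd (edF_inj ht hd h), edF_mem ht⟩

/-- Generic construction of a layout for a one-edge-deleted graph from an
index coloring. -/
lemma erase_layout {k d : ℕ} (s q : ℕ) (hd : d < 2*k+7) (coli : ℕ → ℕ)
    (hbound : ∀ t, t < 2*k+7 → coli t < s + q)
    (hcons : ∀ t t', t < 2*k+7 → t' < 2*k+7 → t ≠ d → t' ≠ d → coli t = coli t' →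
      (coli t < s → ¬ Cross (edF k t) (edF k t')) ∧
      (s ≤ coli t → ¬ Nest (edF k t) (edF k t'))) :
    ((Gk k).erase (edF k d)).HasLayout s q := by
  refine ⟨fun e => coli (idx k e), ?_, ?_⟩
  · intro e he
    obtain ⟨t, ht, htd, rfl⟩ := (mem_erase_E hd).1 he
    show coli (idx k (edF k t)) < s + q
    rw [idx_edF ht]
    exact hbound t ht
  · intro e he f hf hc
    obtain ⟨t, ht, htd, rfl⟩ := (mem_erase_E hd).1 he
    obtain ⟨t', ht', htd', rfl⟩ := (mem_erase_E hd).1 hf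
    have hc' : coli (idx k (edF k t)) = coli (idx k (edF k t')) := hc
    rw [idx_edF ht, idx_edF ht'] at hc'
    have := hcons t t' ht ht' htd htd' hc'
    constructor
    · show coli (idx k (edF k t)) < s → _
      rw [idx_edF ht]
      exact this.1
    · show s ≤ coli (idx k (edF k t)) → _
      rw [idx_edF ht]
      exact this.2

/-- Deleting a cycle edge yields a 2-stack layout. -/
lemma erase_cycle (k d : ℕ) (hd : d ≤ 2*k+2) :
    ((Gk k).erase (edF k d)).HasLayout 2 0 := by
  apply erase_layout 2 0 (by omega) (colA k d)
  · intro t ht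
    have := colA_cases k d t; omega
  · intro t t' ht ht' htd htd' hceq
    constructor
    · intro _
      rw [cross_char t t' ht ht']
      have := colA_cases k d t
      have := colA_cases k d t'
      omega
    · intro hle
      exfalso
      have := colA_cases k d t
      omega

/-- Deleting `C` yields a 1-stack 1-queue layout. -/
lemma erase_C (k : ℕ) : ((Gk k).erase (edF k (2*k+3))).HasLayout 1 1 := by
  apply erase_layout 1 1 (by omega) (colB k)
  · intro t ht
    have := colB_cases k t; omega
  · intro t t' ht ht' htd htd' hceq
    have h1 := colB_cases k t
    have h2 := colB_cases k t'
    constructor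
    · intro hlt
      rw [cross_char t t' ht ht']
      omega
    · intro hle
      rw [nest_char t t' ht ht']
      omega

/-- Deleting `D1` yields a 2-queue layout. -/
lemma erase_D1 (k : ℕ) : ((Gk k).erase (edF k (2*k+4))).HasLayout 0 2 := by
  apply erase_layout 0 2 (by omega) (colC k)
  · intro t ht
    have := colC_cases k t; omega
  · intro t t' ht ht' htd htd' hceq
    have h1 := colC_cases k t
    have h2 := colC_cases k t'
    constructor
    · intro hlt; exfalso; omega
    · intro hle
      rw [nest_char t t' ht ht']
      omega

/-- Deleting `D2` or `E` yields a 2-queue layout. -/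
lemma erase_D2E (k d : ℕ) (hd : d = 2*k+5 ∨ d = 2*k+6) :
    ((Gk k).erase (edF k d)).HasLayout 0 2 := by
  apply erase_layout 0 2 (by omega) (colD k)
  · intro t ht
    have := colD_cases k t; omega
  · intro t t' ht ht' htd htd' hceq
    have h1 := colD_cases k t
    have h2 := colD_cases k t'
    constructor
    · intro hlt; exfalso; omega
    · intro hle
      rw [nest_char t t' ht ht']
      omega

/-- Every one-edge-deleted subgraph has mixed page number at most 2. -/
lemma erase_mn (k : ℕ) {e : Fin ((Gk k).n) × Fin ((Gk k).n)} (he : e ∈ (Gk k).E) :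
    ((Gk k).erase e).mn ≤ 2 := by
  obtain ⟨t, ht, rfl⟩ := mem_E.1 he
  have h2 : ∃ s q, s + q = 2 ∧ ((Gk k).erase (edF k t)).HasLayout s q := by
    by_cases h1 : t ≤ 2*k+2
    · exact ⟨2, 0, rfl, erase_cycle k t h1⟩
    · by_cases hc : t = 2*k+3
      · subst hc; exact ⟨1, 1, rfl, erase_C k⟩
      · by_cases hD : t = 2*k+4
        · subst hD; exact ⟨0, 2, rfl, erase_D1 k⟩
        · exact ⟨0, 2, rfl, erase_D2E k t (by omega)⟩
  obtain ⟨s, q, hsq, hl⟩ := h2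
  have hmem : 2 ∈ {m | ∃ s q, s + q = m ∧ ((Gk k).erase (edF k t)).HasLayout s q} :=
    ⟨s, q, hsq, hl⟩
  exact Nat.sInf_le hmem

/-- `Gk k` is a 2-critical ordered matching. -/
lemma isKCritical (k : ℕ) : (Gk k).IsKCritical 2 :=
  ⟨mn_gt_two k, fun _ he => erase_mn k he⟩

end Crit
end MixedLayouts

namespace MixedLayouts

/-- For every `n ≥ 3`, there exists a `2`-critical ordered
matching with at least `n` vertices. -/
theorem exists_large_two_critical_matching (n : ℕ) (hn : 3 ≤ n) :
    ∃ G : OGraph, G.IsMatching ∧ n ≤ G.n ∧ G.IsKCritical 2 := by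
  refine ⟨Crit.Gk n, Crit.isMatching_Gk n, ?_, Crit.isKCritical n⟩
  show n ≤ 4*n+14
  omega

end MixedLayouts
end
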